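/- arXiv:2509.17705 — 5 statements merged into one kernel-verified Lean document; each statement's English description precedes it below -/
import Mathlib

section
/- For all nonnegative integers t, α and all n ≥ 0, the number of overpartition t-tuples satisfies p̄_t(2^{2α+2}·n + 2^{2α+1}) ≡ 0 (mod 4). -/
/-- The number of overpartitions of `n`: a partition of `n` together with a
choice of which distinct part values are overlined (the first occurrence of a
part value may be overlined), so that the count is `∑_{λ ⊢ n} 2^{#distinct parts of λ}`. -/
def overpartitionCount (n : ℕ) : ℕ :=
  ∑ p : n.Partition, 2 ^ p.parts.toFinset.card

/-- The number of overpartition `t`-tuples of `n`: `t`-tuples of overpartitions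
whose sizes sum to `n`. -/
def overpartitionTuples (t n : ℕ) : ℕ :=
  ∑ c ∈ Finset.Nat.antidiagonalTuple t n, ∏ i, overpartitionCount (c i)

lemma overpartitionCount_zero : overpartitionCount 0 = 1 := by decide

lemma parts_ne_zero {n : ℕ} (hn : n ≠ 0) (p : n.Partition) :
    p.parts ≠ 0 := by
  intro h
  exact hn (by rw [← p.parts_sum, h]; rfl)

lemma two_dvd_overpartitionCount {n : ℕ} (hn : n ≠ 0) :
    2 ∣ overpartitionCount n := by
  apply Finset.dvd_sum
  intro p _
  apply dvd_pow_self 2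
  simp only [ne_eq, Finset.card_eq_zero, Multiset.toFinset_eq_empty]
  exact parts_ne_zero hn p

/-- The partitions of `n` with exactly one distinct part value are in bijection
with the divisors of `n`. -/
lemma card_one_part_partitions {n : ℕ} (hn : n ≠ 0) :
    (Finset.univ.filter (fun p : n.Partition => p.parts.toFinset.card = 1)).card
      = n.divisors.card := by
  refine Finset.card_bij' (fun p _ => p.parts.toFinset.sup id)
    (fun d hd => ⟨Multiset.replicate (n / d) d,
      fun hi => by
        rw [Multiset.eq_of_mem_replicate hi]
        exact Nat.pos_of_mem_divisors hd,
      by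
        rw [Multiset.sum_replicate, smul_eq_mul]
        exact Nat.div_mul_cancel (Nat.dvd_of_mem_divisors hd)⟩)
    ?hi ?hj ?left ?right
  case hi =>
    intro p hp
    simp only [Finset.mem_filter, Finset.mem_univ, true_and] at hp
    obtain ⟨a, ha⟩ := Finset.card_eq_one.mp hp
    have hm : p.parts.toFinset.sup id = a := by rw [ha]; simp
    have hall : ∀ b ∈ p.parts, b = a := by
      intro b hb
      have : b ∈ p.parts.toFinset := Multiset.mem_toFinset.mpr hb
      rw [ha] at this
      exact Finset.mem_singleton.mp this
    have hrep := Multiset.eq_replicate_of_mem hall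
    have hsum : Multiset.card p.parts * a = n := by
      have h1 : p.parts.sum = Multiset.card p.parts * a := by
        conv_lhs => rw [hrep]
        rw [Multiset.sum_replicate, smul_eq_mul]
      rw [← h1, p.parts_sum]
    show p.parts.toFinset.sup id ∈ n.divisors
    rw [hm, Nat.mem_divisors]
    exact ⟨⟨Multiset.card p.parts, hsum.symm.trans (mul_comm _ _)⟩, hn⟩
  case hj =>
    intro d hd
    simp only [Finset.mem_filter, Finset.mem_univ, true_and]
    have hd0 : 0 < d := Nat.pos_of_mem_divisors hd
    have hnd : n / d ≠ 0 := by
      rw [Nat.div_ne_zero_iff, and_iff_right hd0.ne']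
      exact Nat.le_of_dvd (Nat.pos_of_ne_zero hn) (Nat.dvd_of_mem_divisors hd)
    rw [Finset.card_eq_one]
    refine ⟨d, ?_⟩
    ext x
    simp [Multiset.mem_toFinset, Multiset.mem_replicate, hnd]
  case left =>
    intro p hp
    simp only [Finset.mem_filter, Finset.mem_univ, true_and] at hp
    obtain ⟨a, ha⟩ := Finset.card_eq_one.mp hp
    have hm : p.parts.toFinset.sup id = a := by rw [ha]; simp
    have hall : ∀ b ∈ p.parts, b = a := by
      intro b hb
      have : b ∈ p.parts.toFinset := Multiset.mem_toFinset.mpr hb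
      rw [ha] at this
      exact Finset.mem_singleton.mp this
    have hrep := Multiset.eq_replicate_of_mem hall
    have ha0 : 0 < a := by
      apply p.parts_pos
      rw [hrep]
      refine Multiset.mem_replicate.mpr ⟨?_, rfl⟩
      intro h
      exact parts_ne_zero hn p (by rw [hrep, h]; rfl)
    have hsum : Multiset.card p.parts * a = n := by
      have h1 : p.parts.sum = Multiset.card p.parts * a := by
        conv_lhs => rw [hrep]
        rw [Multiset.sum_replicate, smul_eq_mul]
      rw [← h1, p.parts_sum]
    apply Nat.Partition.ext
    show Multiset.replicate (n / (p.parts.toFinset.sup id)) (p.parts.toFinset.sup id) = p.parts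
    rw [hm]
    conv_rhs => rw [hrep]
    congr 1
    exact Nat.div_eq_of_eq_mul_left ha0 hsum.symm
  case right =>
    intro d hd
    show (Multiset.replicate (n / d) d).toFinset.sup id = d
    have hd0 : 0 < d := Nat.pos_of_mem_divisors hd
    have hnd : n / d ≠ 0 := by
      rw [Nat.div_ne_zero_iff, and_iff_right hd0.ne']
      exact Nat.le_of_dvd (Nat.pos_of_ne_zero hn) (Nat.dvd_of_mem_divisors hd)
    have h : (Multiset.replicate (n / d) d).toFinset = {d} := by
      ext x
      simp [Multiset.mem_toFinset, Multiset.mem_replicate, hnd]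
    rw [h]
    simp

lemma four_dvd_overpartitionCount {n : ℕ} (hn : n ≠ 0)
    (hev : Even n.divisors.card) : 4 ∣ overpartitionCount n := by
  classical
  rw [overpartitionCount,
    ← Finset.sum_filter_add_sum_filter_not Finset.univ
      (fun p : n.Partition => p.parts.toFinset.card = 1)]
  apply Nat.dvd_add
  · have : ∀ p ∈ Finset.univ.filter
        (fun p : n.Partition => p.parts.toFinset.card = 1),
        2 ^ p.parts.toFinset.card = 2 := by
      intro p hp
      simp only [Finset.mem_filter] at hp
      rw [hp.2]; rfl
    rw [Finset.sum_congr rfl this, Finset.sum_const, smul_eq_mul,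
      card_one_part_partitions hn]
    obtain ⟨k, hk⟩ := hev
    rw [hk]
    ring_nf
    omega
  · apply Finset.dvd_sum
    intro p hp
    simp only [Finset.mem_filter, Finset.mem_univ, true_and] at hp
    have h1 : p.parts.toFinset.card ≠ 0 := by
      simp only [ne_eq, Finset.card_eq_zero, Multiset.toFinset_eq_empty]
      exact parts_ne_zero hn p
    have h2 : 2 ≤ p.parts.toFinset.card := by omega
    calc (4 : ℕ) = 2 ^ 2 := rfl
      _ ∣ 2 ^ p.parts.toFinset.card := pow_dvd_pow 2 h2

lemma even_card_divisors {α n : ℕ} :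
    Even (2 ^ (2 * α + 1) * (2 * n + 1)).divisors.card := by
  set N := 2 ^ (2 * α + 1) * (2 * n + 1) with hN
  have hodd : ¬ (2 ∣ 2 * n + 1) := by omega
  have hN0 : N ≠ 0 := by positivity
  have hfac : N.factorization 2 = 2 * α + 1 := by
    rw [hN, Nat.factorization_mul (by positivity) (by omega),
      Nat.Prime.factorization_pow Nat.prime_two]
    simp [Nat.factorization_eq_zero_of_not_dvd hodd]
  have h2mem : 2 ∈ N.primeFactors := by
    rw [Nat.mem_primeFactors]
    exact ⟨Nat.prime_two, ⟨2 ^ (2 * α) * (2 * n + 1), by rw [hN]; ring⟩, hN0⟩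
  rw [Nat.card_divisors hN0]
  rw [even_iff_two_dvd]
  have hd : (2 : ℕ) ∣ N.factorization 2 + 1 := by rw [hfac]; omega
  exact hd.trans (Finset.dvd_prod_of_mem (fun p => N.factorization p + 1) h2mem)

theorem overpartitionTuples_pow_two_mod_four (t α n : ℕ) :
    overpartitionTuples t (2 ^ (2 * α + 2) * n + 2 ^ (2 * α + 1)) ≡ 0 [MOD 4] := by
  classical
  set N := 2 ^ (2 * α + 2) * n + 2 ^ (2 * α + 1) with hNdef
  have hNform : N = 2 ^ (2 * α + 1) * (2 * n + 1) := by
    rw [hNdef, pow_succ]; ring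
  have hN0 : N ≠ 0 := by rw [hNform]; positivity
  have h4N : 4 ∣ overpartitionCount N := by
    rw [hNform]
    exact four_dvd_overpartitionCount (by positivity) even_card_divisors
  rw [Nat.modEq_zero_iff_dvd, overpartitionTuples]
  apply Finset.dvd_sum
  intro c hc
  rw [Finset.Nat.mem_antidiagonalTuple] at hc
  have hex : ∃ i, c i ≠ 0 := by
    by_contra h
    push_neg at h
    apply hN0
    rw [← hc]
    exact Finset.sum_eq_zero (fun i _ => h i)
  obtain ⟨i, hi⟩ := hex
  by_cases hj : ∃ j, j ≠ i ∧ c j ≠ 0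
  · obtain ⟨j, hji, hj0⟩ := hj
    have h1 : ∏ k, overpartitionCount (c k)
        = overpartitionCount (c i) * ∏ k ∈ Finset.univ.erase i, overpartitionCount (c k) :=
      (Finset.mul_prod_erase _ _ (Finset.mem_univ i)).symm
    have hjmem : j ∈ Finset.univ.erase i := Finset.mem_erase.mpr ⟨hji, Finset.mem_univ j⟩
    have h2 : ∏ k ∈ Finset.univ.erase i, overpartitionCount (c k)
        = overpartitionCount (c j) * ∏ k ∈ (Finset.univ.erase i).erase j,
            overpartitionCount (c k) :=
      (Finset.mul_prod_erase _ _ hjmem).symm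
    rw [h1, h2]
    have d1 := two_dvd_overpartitionCount hi
    have d2 := two_dvd_overpartitionCount hj0
    obtain ⟨a, ha⟩ := d1
    obtain ⟨b, hb⟩ := d2
    rw [ha, hb]
    exact ⟨a * (b * ∏ k ∈ (Finset.univ.erase i).erase j, overpartitionCount (c k)), by ring⟩
  · push_neg at hj
    have hci : c i = N := by
      rw [← hc, Fintype.sum_eq_single i (fun j hji => hj j hji)]
    have hprod : ∏ k, overpartitionCount (c k) = overpartitionCount (c i) := by
      apply Fintype.prod_eq_single
      intro j hji
      rw [hj j hji, overpartitionCount_zero]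
    rw [hprod, hci]
    exact h4N
end

section
/- For all nonnegative integers t, α and all n ≥ 0: if t is odd and n is a triangular number (i.e., n = k(k+1)/2 for some nonnegative integer k), then p̄_t(2^{2α+3}·n + 2^{2α}) ≡ 2 (mod 4); otherwise p̄_t(2^{2α+3}·n + 2^{2α}) ≡ 0 (mod 4). -/
/-- The number of partitions of `n` with exactly one distinct part value equals
the number of divisors of `n`. -/
lemma card_single_part_value (N : ℕ) (hN : N ≠ 0) :
    (Finset.univ.filter fun p : N.Partition => p.parts.toFinset.card = 1).card
      = N.divisors.card := by
  symm
  have hrep : ∀ d ∈ N.divisors, N / d ≠ 0 := by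
    intro d hd
    have := Nat.div_pos (Nat.le_of_dvd (Nat.pos_of_ne_zero hN)
      (Nat.dvd_of_mem_divisors hd)) (Nat.pos_of_mem_divisors hd)
    omega
  apply Finset.card_bij (fun d hd =>
    (⟨Multiset.replicate (N / d) d,
      fun hi => by
        rw [Multiset.eq_of_mem_replicate hi]; exact Nat.pos_of_mem_divisors hd,
      by rw [Multiset.sum_replicate, smul_eq_mul,
             Nat.div_mul_cancel (Nat.dvd_of_mem_divisors hd)]⟩ : N.Partition))
  · intro d hd
    simp only [Finset.mem_filter, Finset.mem_univ, true_and]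
    have : (Multiset.replicate (N / d) d).toFinset = {d} := by
      ext x
      simp [Multiset.mem_replicate, hrep d hd]
    rw [this]
    exact Finset.card_singleton d
  · intro d₁ hd₁ d₂ hd₂ h
    have h' : Multiset.replicate (N / d₁) d₁ = Multiset.replicate (N / d₂) d₂ :=
      congrArg Nat.Partition.parts h
    have : d₁ ∈ Multiset.replicate (N / d₂) d₂ := by
      rw [← h']; exact Multiset.mem_replicate.mpr ⟨hrep d₁ hd₁, rfl⟩
    exact Multiset.eq_of_mem_replicate this
  · intro p hp
    simp only [Finset.mem_filter, Finset.mem_univ, true_and] at hp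
    obtain ⟨a, ha⟩ := Finset.card_eq_one.mp hp
    have hmem : ∀ x ∈ p.parts, x = a := fun x hx => by
      have : x ∈ p.parts.toFinset := Multiset.mem_toFinset.mpr hx
      rw [ha] at this; exact Finset.mem_singleton.mp this
    have hrepl : p.parts = Multiset.replicate (Multiset.card p.parts) a :=
      Multiset.eq_replicate_card.mpr hmem
    have hsum : Multiset.card p.parts * a = N := by
      have := p.parts_sum
      rw [hrepl] at this
      simpa [Multiset.sum_replicate, smul_eq_mul] using this
    have hapos : 0 < a := by
      refine p.parts_pos ?_
      have : a ∈ p.parts.toFinset := by rw [ha]; exact Finset.mem_singleton_self a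
      exact Multiset.mem_toFinset.mp this
    have hdvd : a ∣ N := Dvd.intro_left _ hsum
    refine ⟨a, Nat.mem_divisors.mpr ⟨hdvd, hN⟩, ?_⟩
    have hcard : N / a = Multiset.card p.parts :=
      Nat.div_eq_of_eq_mul_left hapos hsum.symm
    apply Nat.Partition.ext
    show Multiset.replicate (N / a) a = _
    rw [hcard, ← hrepl]


lemma overpartitionCount_cast (N : ℕ) (hN : N ≠ 0) :
    (overpartitionCount N : ZMod 4) = 2 * (N.divisors.card : ZMod 4) := by
  rw [overpartitionCount]
  push_cast
  rw [← Finset.sum_filter_add_sum_filter_not Finset.univ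
    (fun p : N.Partition => p.parts.toFinset.card = 1)]
  have h2 : ∀ p ∈ Finset.univ.filter
      fun p : N.Partition => ¬ p.parts.toFinset.card = 1,
      (2 : ZMod 4) ^ p.parts.toFinset.card = 0 := by
    intro p hp
    simp only [Finset.mem_filter, Finset.mem_univ, true_and] at hp
    have h0 : p.parts.toFinset.card ≠ 0 := by
      intro h
      rw [Finset.card_eq_zero, Multiset.toFinset_eq_empty] at h
      exact hN (by simpa [h] using p.parts_sum.symm)
    have hc : p.parts.toFinset.card = 2 + (p.parts.toFinset.card - 2) := by omega
    rw [hc, pow_add]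
    have h4 : (2 : ZMod 4) ^ 2 = 0 := by decide
    rw [h4, zero_mul]
  rw [Finset.sum_eq_zero h2, add_zero]
  have h1 : ∀ p ∈ Finset.univ.filter
      fun p : N.Partition => p.parts.toFinset.card = 1,
      (2 : ZMod 4) ^ p.parts.toFinset.card = 2 := by
    intro p hp
    simp only [Finset.mem_filter, Finset.mem_univ, true_and] at hp
    rw [hp, pow_one]
  rw [Finset.sum_congr rfl h1, Finset.sum_const, card_single_part_value N hN]
  simp [mul_comm]

lemma overpartitionTuples_cast (t N : ℕ) (hN : N ≠ 0) :
    (overpartitionTuples t N : ZMod 4)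
      = (t : ZMod 4) * (overpartitionCount N : ZMod 4) := by
  classical
  rw [overpartitionTuples]
  push_cast
  rw [← Finset.sum_filter_add_sum_filter_not (Finset.Nat.antidiagonalTuple t N)
    (fun c => ∃ i, c i = N)]
  have h2 : ∀ c ∈ (Finset.Nat.antidiagonalTuple t N).filter
      fun c => ¬ ∃ i, c i = N,
      (∏ i, (overpartitionCount (c i) : ZMod 4)) = 0 := by
    intro c hc
    simp only [Finset.mem_filter, Finset.Nat.mem_antidiagonalTuple, not_exists] at hc
    obtain ⟨hsum, hne⟩ := hc
    -- find an index with nonzero entry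
    have hex : ∃ i, c i ≠ 0 := by
      by_contra h
      push_neg at h
      exact hN (by rw [← hsum]; exact Finset.sum_eq_zero fun i _ => h i)
    obtain ⟨i, hi⟩ := hex
    -- find a second one
    have hlt : c i < N := lt_of_le_of_ne
      (hsum ▸ Finset.single_le_sum (fun j _ => Nat.zero_le (c j)) (Finset.mem_univ i))
      (hne i)
    have hex2 : ∃ j ∈ Finset.univ.erase i, c j ≠ 0 := by
      by_contra h
      push_neg at h
      have : ∑ j ∈ Finset.univ.erase i, c j = 0 :=
        Finset.sum_eq_zero fun j hj => h j hj
      have := Finset.add_sum_erase Finset.univ c (Finset.mem_univ i)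
      omega
    obtain ⟨j, hj, hj0⟩ := hex2
    have hdvd : (4 : ℕ) ∣ ∏ i, overpartitionCount (c i) := by
      have e1 : ∏ k, overpartitionCount (c k)
          = overpartitionCount (c i) * ∏ k ∈ Finset.univ.erase i, overpartitionCount (c k) :=
        (Finset.mul_prod_erase Finset.univ _ (Finset.mem_univ i)).symm
      have e2 : overpartitionCount (c j) ∣ ∏ k ∈ Finset.univ.erase i, overpartitionCount (c k) :=
        Finset.dvd_prod_of_mem _ hj
      have : (2 * 2 : ℕ) ∣ overpartitionCount (c i)
          * ∏ k ∈ Finset.univ.erase i, overpartitionCount (c k) :=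
        mul_dvd_mul (two_dvd_overpartitionCount hi)
          ((two_dvd_overpartitionCount hj0).trans e2)
      rw [e1]
      exact this
    obtain ⟨k, hk⟩ := hdvd
    rw [← Nat.cast_prod, hk, Nat.cast_mul, show ((4 : ℕ) : ZMod 4) = 0 by decide, zero_mul]
  rw [Finset.sum_eq_zero h2, add_zero]
  have hfilter : (Finset.Nat.antidiagonalTuple t N).filter (fun c => ∃ i, c i = N)
      = Finset.univ.image (fun i : Fin t => Pi.single i N) := by
    ext c
    simp only [Finset.mem_filter, Finset.Nat.mem_antidiagonalTuple, Finset.mem_image,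
      Finset.mem_univ, true_and]
    constructor
    · rintro ⟨hsum, i, hi⟩
      refine ⟨i, ?_⟩
      funext j
      rcases eq_or_ne j i with rfl | hne
      · rw [Pi.single_eq_same, hi]
      · rw [Pi.single_eq_of_ne hne]
        have := Finset.add_sum_erase Finset.univ c (Finset.mem_univ i)
        have hz : ∑ k ∈ Finset.univ.erase i, c k = 0 := by omega
        have := (Finset.sum_eq_zero_iff.mp hz) j (Finset.mem_erase.mpr ⟨hne, Finset.mem_univ j⟩)
        omega
    · rintro ⟨i, rfl⟩
      exact ⟨Fintype.sum_pi_single' i N, i, by simp⟩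
  rw [hfilter, Finset.sum_image (by
    intro i _ j _ h
    by_contra hne
    have := congrFun h i
    dsimp only at this
    rw [Pi.single_eq_same, Pi.single_eq_of_ne hne] at this
    exact hN this)]
  have hprod : ∀ i : Fin t,
      (∏ j, (overpartitionCount ((Pi.single i N : Fin t → ℕ) j) : ZMod 4))
        = (overpartitionCount N : ZMod 4) := by
    intro i
    rw [Finset.prod_eq_single i
      (fun j _ hj => by rw [Pi.single_eq_of_ne hj, overpartitionCount_zero]; norm_num)
      (fun h => absurd (Finset.mem_univ i) h)]
    rw [Pi.single_eq_same]
  rw [Finset.sum_congr rfl fun i _ => hprod i, Finset.sum_const]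
  simp [mul_comm]

lemma card_divisors_parity (N : ℕ) (hN : N ≠ 0) :
    N.divisors.card % 2 = if IsSquare N then 1 else 0 := by
  classical
  rw [← Finset.card_filter_add_card_filter_not (s := N.divisors)
    (p := fun d => N / d = d)]
  have heven : 2 ∣ (N.divisors.filter fun d => ¬ N / d = d).card := by
    have hz : (((N.divisors.filter fun d => ¬ N / d = d).card : ℕ) : ZMod 2) = 0 := by
      rw [Finset.card_eq_sum_ones]
      push_cast
      refine Finset.sum_involution (fun d _ => N / d) (fun a ha => by decide)
        (fun a ha _ => (Finset.mem_filter.mp ha).2) ?_ ?_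
      · intro a ha
        simp only [Finset.mem_filter, Nat.mem_divisors] at ha ⊢
        obtain ⟨⟨hdvd, _⟩, hne⟩ := ha
        refine ⟨⟨Nat.div_dvd_of_dvd hdvd, hN⟩, ?_⟩
        rw [Nat.div_div_self hdvd hN]
        exact fun h => hne h.symm
      · intro a ha
        exact Nat.div_div_self (Nat.dvd_of_mem_divisors (Finset.mem_filter.mp ha).1) hN
    exact (ZMod.natCast_eq_zero_iff _ 2).mp hz
  have hfix : (N.divisors.filter fun d => N / d = d).card = if IsSquare N then 1 else 0 := by
    split_ifs with hsq
    · obtain ⟨r, hr⟩ := hsq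
      have hr0 : r ≠ 0 := by rintro rfl; exact hN (by simpa using hr)
      have : (N.divisors.filter fun d => N / d = d) = {r} := by
        ext d
        simp only [Finset.mem_filter, Nat.mem_divisors, Finset.mem_singleton]
        constructor
        · rintro ⟨⟨hdvd, _⟩, hdiv⟩
          have hdd : d * d = N := by
            conv_rhs => rw [← Nat.div_mul_cancel hdvd]
            rw [hdiv]
          exact Nat.mul_self_inj.mp (by rw [hdd, hr])
        · rintro rfl
          exact ⟨⟨Dvd.intro _ hr.symm, hN⟩, by
            rw [hr, Nat.mul_div_cancel_left _ (Nat.pos_of_ne_zero hr0)]⟩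
      rw [this, Finset.card_singleton]
    · rw [Finset.card_eq_zero]
      ext d
      simp only [Finset.mem_filter, Nat.mem_divisors, Finset.notMem_empty, iff_false, not_and]
      rintro ⟨hdvd, _⟩ hdiv
      refine hsq ⟨d, ?_⟩
      conv_lhs => rw [← Nat.div_mul_cancel hdvd, hdiv]
  obtain ⟨m, hm⟩ := heven
  rw [hfix, hm]
  split_ifs <;> omega


lemma isSquare_sq_mul (a b : ℕ) (ha : a ≠ 0) : IsSquare (a * a * b) ↔ IsSquare b := by
  constructor
  · rintro ⟨c, hc⟩
    have h2 : a ^ 2 ∣ c ^ 2 := ⟨b, by rw [sq, ← hc, sq]⟩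
    obtain ⟨e, rfl⟩ := (Nat.pow_dvd_pow_iff two_ne_zero).mp h2
    refine ⟨e, ?_⟩
    have ha2 : 0 < a * a := Nat.mul_pos (Nat.pos_of_ne_zero ha) (Nat.pos_of_ne_zero ha)
    apply Nat.eq_of_mul_eq_mul_left ha2
    rw [hc]; ring
  · rintro ⟨e, rfl⟩
    exact ⟨a * e, by ring⟩

lemma isSquare_eight_mul_add_one (n : ℕ) :
    IsSquare (8 * n + 1) ↔ ∃ k, n = k * (k + 1) / 2 := by
  constructor
  · rintro ⟨r, hr⟩
    rcases Nat.even_or_odd r with ⟨m, rfl⟩ | ⟨k, hk⟩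
    · exfalso
      have h1 : 8 * n + 1 = (m + m) * (m + m) := hr
      have h2 : (m + m) * (m + m) = 4 * (m * m) := by ring
      omega
    · subst hk
      refine ⟨k, ?_⟩
      have h1 : 8 * n + 1 = (2 * k + 1) * (2 * k + 1) := hr
      have h2 : (2 * k + 1) * (2 * k + 1) = 4 * (k * k) + 4 * k + 1 := by ring
      have h3 : k * (k + 1) = k * k + k := by ring
      omega
  · rintro ⟨k, rfl⟩
    refine ⟨2 * k + 1, ?_⟩
    obtain ⟨m, hm⟩ := Nat.even_mul_succ_self k
    have h2 : (2 * k + 1) * (2 * k + 1) = 4 * (k * k) + 4 * k + 1 := by ring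
    have h3 : k * (k + 1) = k * k + k := by ring
    omega

theorem overpartitionTuples_pow_two_dichotomy_mod_four (t α n : ℕ) :
    ((Odd t ∧ ∃ k : ℕ, n = k * (k + 1) / 2) →
      overpartitionTuples t (2 ^ (2 * α + 3) * n + 2 ^ (2 * α)) ≡ 2 [MOD 4]) ∧
    (¬ (Odd t ∧ ∃ k : ℕ, n = k * (k + 1) / 2) →
      overpartitionTuples t (2 ^ (2 * α + 3) * n + 2 ^ (2 * α)) ≡ 0 [MOD 4]) := by
  set N := 2 ^ (2 * α + 3) * n + 2 ^ (2 * α) with hNdef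
  have hpow : 0 < 2 ^ (2 * α) := Nat.pow_pos (by norm_num)
  have hN : N ≠ 0 := by omega
  have hform : N = (2 ^ α * 2 ^ α) * (8 * n + 1) := by
    rw [hNdef, pow_add, two_mul, pow_add]; ring
  have hsq : IsSquare N ↔ (∃ k, n = k * (k + 1) / 2) := by
    rw [hform, isSquare_sq_mul _ _ (pow_ne_zero α two_ne_zero),
      isSquare_eight_mul_add_one]
  have key : overpartitionTuples t N ≡ 2 * (t * N.divisors.card) [MOD 4] := by
    rw [← ZMod.natCast_eq_natCast_iff]
    push_cast
    rw [overpartitionTuples_cast t N hN, overpartitionCount_cast N hN]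
    ring
  have hd := card_divisors_parity N hN
  constructor
  · rintro ⟨hodd, htri⟩
    refine key.trans ?_
    rw [if_pos (hsq.mpr htri)] at hd
    obtain ⟨m, hm⟩ := hodd.mul (Nat.odd_iff.mpr hd)
    show (2 * (t * N.divisors.card)) % 4 = 2 % 4
    omega
  · intro hcon
    refine key.trans ?_
    have heven : Even (t * N.divisors.card) := by
      rcases Nat.even_or_odd t with he | ho
      · exact he.mul_right _
      · have htri : ¬ ∃ k, n = k * (k + 1) / 2 := fun h => hcon ⟨ho, h⟩
        have hns : ¬ IsSquare N := fun h => htri (hsq.mp h)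
        rw [if_neg hns] at hd
        exact (Nat.even_iff.mpr hd).mul_left _
    obtain ⟨m, hm⟩ := heven
    show (2 * (t * N.divisors.card)) % 4 = 0 % 4
    omega
end

section
/- For all nonnegative integers t and all n ≥ 0, the number of overpartition t-tuples satisfies p̄_t(8n+6) ≡ 0 (mod 8). -/
open Finset PowerSeries


def quadSet (n : ℕ) : Finset ((ℕ × ℕ) × ℕ × ℕ) :=
  (((range (n+1)) ×ˢ (range (n+1))) ×ˢ ((range (n+1)) ×ˢ (range (n+1)))).filter
    fun x => 1 ≤ x.1.2 ∧ x.1.2 < x.1.1 ∧ 1 ≤ x.2.1 ∧ 1 ≤ x.2.2 ∧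
      x.2.1 * x.1.1 + x.2.2 * x.1.2 = n

lemma mem_quadSet {n : ℕ} {x : (ℕ × ℕ) × ℕ × ℕ} :
    x ∈ quadSet n ↔ 1 ≤ x.1.2 ∧ x.1.2 < x.1.1 ∧ 1 ≤ x.2.1 ∧ 1 ≤ x.2.2 ∧
      x.2.1 * x.1.1 + x.2.2 * x.1.2 = n := by
  obtain ⟨⟨m, l⟩, a, b⟩ := x
  simp only [quadSet, mem_filter, mem_product, mem_range]
  constructor
  · rintro ⟨-, h⟩; exact h
  · rintro ⟨h1, h2, h3, h4, h5⟩
    have e1 : m ≤ a * m := Nat.le_mul_of_pos_left m h3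
    have e2 : l ≤ b * l := Nat.le_mul_of_pos_left l h4
    have e3 : a ≤ a * m := Nat.le_mul_of_pos_right a (by omega)
    have e4 : b ≤ b * l := Nat.le_mul_of_pos_right b (by omega)
    exact ⟨⟨⟨by omega, by omega⟩, by omega, by omega⟩, h1, h2, h3, h4, h5⟩

lemma even_card_quadSet {n : ℕ} (hn : n % 4 = 2) : Even (quadSet n).card := by
  have h : ((quadSet n).card : ZMod 2) = 0 := by
    rw [Finset.card_eq_sum_ones, Nat.cast_sum]
    refine Finset.sum_involution
      (fun x _ => ((x.2.1 + x.2.2, x.2.1), (x.1.2, x.1.1 - x.1.2))) ?_ ?_ ?_ ?_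
    · intro x _; decide
    · rintro ⟨⟨m, l⟩, a, b⟩ hx hne
      rw [mem_quadSet] at hx
      obtain ⟨h1, h2, h3, h4, h5⟩ := hx
      simp only at h1 h2 h3 h4 h5
      intro heq
      simp only [Prod.mk.injEq] at heq
      obtain ⟨⟨hm, hl⟩, ha, hb⟩ := heq
      subst hl hm
      rcases Nat.even_or_odd a with ⟨c, rfl⟩ | ⟨c, rfl⟩ <;> ring_nf at h5 <;> omega
    · rintro ⟨⟨m, l⟩, a, b⟩ hx
      rw [mem_quadSet] at hx ⊢
      obtain ⟨h1, h2, h3, h4, h5⟩ := hx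
      simp only at h1 h2 h3 h4 h5 ⊢
      refine ⟨h3, by omega, h1, by omega, ?_⟩
      have h6 : m - l + l = m := by omega
      have : l * (a + b) + (m - l) * a = a * m + b * l := by nlinarith [h6]
      omega
    · rintro ⟨⟨m, l⟩, a, b⟩ hx
      rw [mem_quadSet] at hx
      dsimp only at hx ⊢
      simp only [Prod.mk.injEq]
      refine ⟨⟨by omega, trivial⟩, trivial, by omega⟩
  rw [ZMod.natCast_eq_zero_iff] at h
  exact even_iff_two_dvd.mpr h

lemma even_card_divisors_s6 {m : ℕ} (hm : m % 4 = 3) : Even m.divisors.card := by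
  have h : ((m.divisors.card : ℕ) : ZMod 2) = 0 := by
    rw [Finset.card_eq_sum_ones, Nat.cast_sum]
    refine Finset.sum_involution (fun d _ => m / d) ?_ ?_ ?_ ?_
    · intro x _; decide
    · intro d hd _ heq
      rw [Nat.mem_divisors] at hd
      have hsq : d * d = m := by
        have h2 := Nat.div_mul_cancel hd.1
        rw [heq] at h2; exact h2
      rcases Nat.even_or_odd d with ⟨c, rfl⟩ | ⟨c, rfl⟩
      · have : (c + c) * (c + c) = 4 * (c * c) := by ring
        omega
      · have : (2 * c + 1) * (2 * c + 1) = 4 * (c * c + c) + 1 := by ring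
        omega
    · intro d hd
      rw [Nat.mem_divisors] at hd ⊢
      exact ⟨Nat.div_dvd_of_dvd hd.1, hd.2⟩
    · intro d hd
      rw [Nat.mem_divisors] at hd
      exact Nat.div_div_self hd.1 hd.2
  rw [ZMod.natCast_eq_zero_iff] at h
  exact even_iff_two_dvd.mpr h

lemma four_dvd_card_divisors {N : ℕ} (hN : N % 8 = 6) : 4 ∣ N.divisors.card := by
  have h2 : N = 2 * (N / 2) := by omega
  have hm : (N / 2) % 4 = 3 := by omega
  have hcop : Nat.Coprime 2 (N / 2) := by
    exact Nat.coprime_two_left.mpr (Nat.odd_iff.mpr (by omega))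
  obtain ⟨k, hk⟩ := even_card_divisors_s6 hm
  rw [h2, Nat.Coprime.card_divisors_mul hcop]
  have : (2 : ℕ).divisors.card = 2 := by decide
  rw [this, hk]
  omega


/-- minimum of a finset of naturals, 0 for empty -/
def fmin (s : Finset ℕ) : ℕ := if h : s.Nonempty then s.min' h else 0
/-- maximum of a finset of naturals, 0 for empty -/
def fmax (s : Finset ℕ) : ℕ := s.sup id

@[simp] lemma fmin_singleton (a : ℕ) : fmin {a} = a := by
  rw [fmin, dif_pos (Finset.singleton_nonempty a)]
  exact Finset.min'_singleton a

@[simp] lemma fmax_singleton (a : ℕ) : fmax {a} = a := by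
  simp [fmax]

@[simp] lemma fmin_pair (a b : ℕ) : fmin {a, b} = min a b := by
  rw [fmin, dif_pos ⟨a, Finset.mem_insert_self a {b}⟩]
  refine le_antisymm (le_min (Finset.min'_le _ a (by simp)) (Finset.min'_le _ b (by simp)))
    (Finset.le_min' _ _ _ ?_)
  intro y hy
  simp only [Finset.mem_insert, Finset.mem_singleton] at hy
  rcases hy with rfl | rfl
  · exact min_le_left _ _
  · exact min_le_right _ _

@[simp] lemma fmax_pair (a b : ℕ) : fmax {a, b} = max a b := by
  simp [fmax, fmax_singleton]

lemma card_filter_zero (n : ℕ) :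
    ((univ : Finset n.Partition).filter fun p => p.parts.toFinset.card = 0).card
      = if n = 0 then 1 else 0 := by
  have key : ∀ p : n.Partition, p.parts.toFinset.card = 0 ↔ n = 0 := by
    intro p
    rw [Finset.card_eq_zero, Multiset.toFinset_eq_empty]
    constructor
    · intro h; rw [← p.parts_sum, h]; rfl
    · intro h
      subst h
      exact Nat.Partition.partition_zero_parts p
  split_ifs with hn
  · subst hn
    rw [Finset.filter_true_of_mem fun p _ => (key p).mpr rfl, Finset.card_univ]
    exact Fintype.card_unique
  · rw [Finset.filter_false_of_mem fun p _ => fun h => hn ((key p).mp h)]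
    exact Finset.card_empty

section one

variable {n : ℕ}

lemma thePart_spec (p : n.Partition) (hp : p.parts.toFinset.card = 1) :
    p.parts.toFinset = {fmin p.parts.toFinset} ∧
    p.parts = Multiset.replicate (Multiset.card p.parts) (fmin p.parts.toFinset) ∧
    Multiset.card p.parts * fmin p.parts.toFinset = n ∧
    fmin p.parts.toFinset ∈ n.divisors := by
  obtain ⟨a, ha⟩ := Finset.card_eq_one.mp hp
  have hmin : fmin p.parts.toFinset = a := by rw [ha, fmin_singleton]
  have htf : p.parts.toFinset = {fmin p.parts.toFinset} := by rw [hmin, ha]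
  have hrep : p.parts = Multiset.replicate (Multiset.card p.parts) (fmin p.parts.toFinset) := by
    rw [Multiset.eq_replicate_card]
    intro b hb
    have : b ∈ p.parts.toFinset := Multiset.mem_toFinset.mpr hb
    rw [htf, Finset.mem_singleton] at this
    exact this
  have hsum : Multiset.card p.parts * fmin p.parts.toFinset = n := by
    conv_rhs => rw [← p.parts_sum]
    conv_rhs => rw [hrep]
    rw [Multiset.sum_replicate, smul_eq_mul]
  have hcpos : 0 < Multiset.card p.parts := by
    rw [Multiset.card_pos]
    intro h0
    rw [h0] at htf
    simp only [Multiset.toFinset_zero] at htf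
    exact Finset.singleton_ne_empty _ htf.symm
  have hmpos : 0 < fmin p.parts.toFinset := by
    apply p.parts_pos
    rw [← Multiset.mem_toFinset, htf]
    exact Finset.mem_singleton_self _
  refine ⟨htf, hrep, hsum, ?_⟩
  rw [Nat.mem_divisors]
  refine ⟨Dvd.intro_left _ hsum, ?_⟩
  rw [← hsum]
  exact (Nat.mul_pos hcpos hmpos).ne'

def repPartition (n m : ℕ) (hm : m ∈ n.divisors) : n.Partition where
  parts := Multiset.replicate (n / m) m
  parts_pos := by
    intro i hi
    rw [Multiset.eq_of_mem_replicate hi]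
    exact Nat.pos_of_mem_divisors hm
  parts_sum := by
    rw [Multiset.sum_replicate, smul_eq_mul]
    exact Nat.div_mul_cancel (Nat.mem_divisors.mp hm).1

lemma repPartition_toFinset (n m : ℕ) (hm : m ∈ n.divisors) :
    (repPartition n m hm).parts.toFinset = {m} := by
  have h0 : n / m ≠ 0 := by
    obtain ⟨hdvd, hn⟩ := Nat.mem_divisors.mp hm
    have := Nat.div_mul_cancel hdvd
    intro h; rw [h] at this; omega
  show (Multiset.replicate (n / m) m).toFinset = {m}
  rw [Multiset.toFinset_replicate]
  simp [h0]

lemma card_filter_one (n : ℕ) :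
    ((univ : Finset n.Partition).filter fun p => p.parts.toFinset.card = 1).card
      = n.divisors.card := by
  refine Finset.card_bij'
    (fun p _ => fmin p.parts.toFinset)
    (fun m hm => repPartition n m hm) ?_ ?_ ?_ ?_
  · intro p hp
    exact (thePart_spec p (mem_filter.mp hp).2).2.2.2
  · intro m hm
    rw [mem_filter]
    refine ⟨mem_univ _, ?_⟩
    rw [repPartition_toFinset n m hm]
    exact Finset.card_singleton m
  · intro p hp
    obtain ⟨htf, hrep, hsum, hdvd⟩ := thePart_spec p (mem_filter.mp hp).2
    have hmpos : 0 < fmin p.parts.toFinset := Nat.pos_of_mem_divisors hdvd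
    have hq : n / fmin p.parts.toFinset = Multiset.card p.parts :=
      Nat.div_eq_of_eq_mul_left hmpos hsum.symm
    apply Nat.Partition.ext
    show Multiset.replicate _ _ = p.parts
    rw [hq, ← hrep]
  · intro m hm
    rw [repPartition_toFinset n m hm, fmin_singleton]

end one

section two

variable {n : ℕ}

lemma two_spec (p : n.Partition) (hp : p.parts.toFinset.card = 2) :
    1 ≤ fmin p.parts.toFinset ∧ fmin p.parts.toFinset < fmax p.parts.toFinset ∧
    1 ≤ Multiset.count (fmax p.parts.toFinset) p.parts ∧
    1 ≤ Multiset.count (fmin p.parts.toFinset) p.parts ∧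
    p.parts.toFinset = {fmax p.parts.toFinset, fmin p.parts.toFinset} ∧
    p.parts = Multiset.replicate (Multiset.count (fmax p.parts.toFinset) p.parts)
        (fmax p.parts.toFinset)
      + Multiset.replicate (Multiset.count (fmin p.parts.toFinset) p.parts)
        (fmin p.parts.toFinset) ∧
    Multiset.count (fmax p.parts.toFinset) p.parts * fmax p.parts.toFinset
      + Multiset.count (fmin p.parts.toFinset) p.parts * fmin p.parts.toFinset = n := by
  obtain ⟨x, y, hxy, hxyeq⟩ := Finset.card_eq_two.mp hp
  have hmin : fmin p.parts.toFinset = min x y := by rw [hxyeq, fmin_pair]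
  have hmax : fmax p.parts.toFinset = max x y := by rw [hxyeq, fmax_pair]
  set L := fmin p.parts.toFinset with hL
  set M := fmax p.parts.toFinset with hM
  have hLM : L < M := by
    rw [hmin, hmax]
    rcases le_or_gt x y with h | h
    · rw [min_eq_left h, max_eq_right h]; omega
    · rw [min_eq_right h.le, max_eq_left h.le]; omega
  have htf : p.parts.toFinset = {M, L} := by
    rw [hxyeq, hmin, hmax]
    rcases le_or_gt x y with h | h
    · rw [min_eq_left h, max_eq_right h]
      exact Finset.pair_comm x y
    · rw [min_eq_right h.le, max_eq_left h.le]
  have hMmem : M ∈ p.parts := by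
    rw [← Multiset.mem_toFinset, htf]; exact Finset.mem_insert_self _ _
  have hLmem : L ∈ p.parts := by
    rw [← Multiset.mem_toFinset, htf]
    exact Finset.mem_insert_of_mem (Finset.mem_singleton_self _)
  have hLpos : 1 ≤ L := p.parts_pos hLmem
  have hA : 1 ≤ Multiset.count M p.parts := Multiset.count_pos.mpr hMmem
  have hB : 1 ≤ Multiset.count L p.parts := Multiset.count_pos.mpr hLmem
  have hrep : p.parts = Multiset.replicate (Multiset.count M p.parts) M
      + Multiset.replicate (Multiset.count L p.parts) L := by
    ext z
    rw [Multiset.count_add, Multiset.count_replicate, Multiset.count_replicate]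
    by_cases hzM : M = z
    · subst hzM
      rw [if_pos rfl, if_neg (by omega)]
      omega
    · rw [if_neg hzM]
      by_cases hzL : L = z
      · subst hzL; rw [if_pos rfl]; omega
      · rw [if_neg hzL]
        by_cases hzmem : z ∈ p.parts
        · exfalso
          have : z ∈ p.parts.toFinset := Multiset.mem_toFinset.mpr hzmem
          rw [htf] at this
          simp only [Finset.mem_insert, Finset.mem_singleton] at this
          omega
        · rw [Multiset.count_eq_zero_of_notMem hzmem]
  have hsum : Multiset.count M p.parts * M + Multiset.count L p.parts * L = n := by
    conv_rhs => rw [← p.parts_sum]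
    conv_rhs => rw [hrep]
    rw [Multiset.sum_add, Multiset.sum_replicate, Multiset.sum_replicate,
      smul_eq_mul, smul_eq_mul]
  exact ⟨hLpos, hLM, hA, hB, htf, hrep, hsum⟩

def quadPartition (n m l a b : ℕ) (hl : 1 ≤ l) (hlm : l < m) (hs : a * m + b * l = n) :
    n.Partition where
  parts := Multiset.replicate a m + Multiset.replicate b l
  parts_pos := by
    intro i hi
    rw [Multiset.mem_add] at hi
    rcases hi with hi | hi <;> rw [Multiset.eq_of_mem_replicate hi] <;> omega
  parts_sum := by
    rw [Multiset.sum_add, Multiset.sum_replicate, Multiset.sum_replicate,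
      smul_eq_mul, smul_eq_mul, hs]

lemma quadPartition_toFinset (n m l a b : ℕ) (hl : 1 ≤ l) (hlm : l < m)
    (ha : 1 ≤ a) (hb : 1 ≤ b) (hs : a * m + b * l = n) :
    (quadPartition n m l a b hl hlm hs).parts.toFinset = {m, l} := by
  show (Multiset.replicate a m + Multiset.replicate b l).toFinset = {m, l}
  rw [Multiset.toFinset_add, Multiset.toFinset_replicate, Multiset.toFinset_replicate,
    if_neg (by omega), if_neg (by omega)]
  rfl

lemma card_filter_two (n : ℕ) :
    ((univ : Finset n.Partition).filter fun p => p.parts.toFinset.card = 2).card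
      = (quadSet n).card := by
  refine Finset.card_bij'
    (fun p _ => ((fmax p.parts.toFinset, fmin p.parts.toFinset),
      (Multiset.count (fmax p.parts.toFinset) p.parts,
       Multiset.count (fmin p.parts.toFinset) p.parts)))
    (fun x hx => quadPartition n x.1.1 x.1.2 x.2.1 x.2.2
      (mem_quadSet.mp hx).1
      (mem_quadSet.mp hx).2.1
      (mem_quadSet.mp hx).2.2.2.2) ?_ ?_ ?_ ?_
  · intro p hp
    obtain ⟨h1, h2, h3, h4, _, _, h7⟩ := two_spec p (mem_filter.mp hp).2
    rw [mem_quadSet]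
    exact ⟨h1, h2, h3, h4, h7⟩
  · intro x hx
    obtain ⟨h1, h2, h3, h4, h5⟩ := mem_quadSet.mp hx
    rw [mem_filter]
    refine ⟨mem_univ _, ?_⟩
    rw [quadPartition_toFinset n x.1.1 x.1.2 x.2.1 x.2.2 h1 h2 h3 h4 h5]
    rw [Finset.card_insert_of_notMem (by simp; omega)]
    rfl
  · intro p hp
    obtain ⟨h1, h2, h3, h4, h5, h6, h7⟩ := two_spec p (mem_filter.mp hp).2
    apply Nat.Partition.ext
    show Multiset.replicate _ _ + Multiset.replicate _ _ = p.parts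
    dsimp only
    exact h6.symm
  · rintro ⟨⟨m, l⟩, a, b⟩ hx
    obtain ⟨h1, h2, h3, h4, h5⟩ := mem_quadSet.mp hx
    dsimp only at h1 h2 h3 h4 h5 ⊢
    have htf := quadPartition_toFinset n m l a b h1 h2 h3 h4 h5
    have hparts : (quadPartition n m l a b h1 h2 h5).parts
        = Multiset.replicate a m + Multiset.replicate b l := rfl
    simp only [Prod.mk.injEq]
    have e1 : fmax {m, l} = m := by rw [fmax_pair]; omega
    have e2 : fmin {m, l} = l := by rw [fmin_pair]; omega
    constructor
    · constructor
      · rw [htf, e1]  -- may complain about proof args mismatch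
      · rw [htf, e2]
    constructor
    · rw [htf, e1, hparts, Multiset.count_add, Multiset.count_replicate,
        Multiset.count_replicate, if_pos rfl, if_neg (by omega)]
      omega
    · rw [htf, e2, hparts, Multiset.count_add, Multiset.count_replicate,
        Multiset.count_replicate, if_pos rfl, if_neg (by omega)]
      omega

end two

lemma two_pow_zmod8 (k : ℕ) : (2 : ZMod 8) ^ k =
    (if k = 0 then 1 else 0) + (if k = 1 then 2 else 0) + (if k = 2 then 4 else 0) := by
  match k with
  | 0 => decide
  | 1 => decide
  | 2 => decide
  | (j+3) =>
    have h : (2 : ZMod 8) ^ (j + 3) = 2 ^ j * 8 := by ring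
    rw [if_neg (by omega), if_neg (by omega), if_neg (by omega), h,
      show (8 : ZMod 8) = 0 by decide, mul_zero]
    simp

lemma overpartitionCount_zmod8 (n : ℕ) :
    ((overpartitionCount n : ℕ) : ZMod 8) =
      (if n = 0 then 1 else 0) + 2 * (n.divisors.card : ZMod 8)
        + 4 * ((quadSet n).card : ZMod 8) := by
  rw [overpartitionCount]
  push_cast
  rw [Finset.sum_congr rfl fun p _ => two_pow_zmod8 p.parts.toFinset.card]
  rw [Finset.sum_add_distrib, Finset.sum_add_distrib]
  have e0 : ∑ p : n.Partition, (if p.parts.toFinset.card = 0 then (1 : ZMod 8) else 0)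
      = if n = 0 then 1 else 0 := by
    rw [← Finset.sum_filter, Finset.sum_const, card_filter_zero n]
    split_ifs <;> simp
  have e1 : ∑ p : n.Partition, (if p.parts.toFinset.card = 1 then (2 : ZMod 8) else 0)
      = 2 * (n.divisors.card : ZMod 8) := by
    rw [← Finset.sum_filter, Finset.sum_const, card_filter_one n, nsmul_eq_mul, mul_comm]
  have e2 : ∑ p : n.Partition, (if p.parts.toFinset.card = 2 then (4 : ZMod 8) else 0)
      = 4 * ((quadSet n).card : ZMod 8) := by
    rw [← Finset.sum_filter, Finset.sum_const, card_filter_two n, nsmul_eq_mul, mul_comm]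
  rw [e0, e1, e2]

noncomputable def Fo : PowerSeries (ZMod 8) := PowerSeries.mk fun k => ((overpartitionCount k : ℕ) : ZMod 8)
noncomputable def Dd : PowerSeries (ZMod 8) := PowerSeries.mk fun k => ((k.divisors.card : ℕ) : ZMod 8)
noncomputable def Ee : PowerSeries (ZMod 8) := PowerSeries.mk fun k => (((quadSet k).card : ℕ) : ZMod 8)

lemma Fo_eq : Fo = 1 + 2 * Dd + 4 * Ee := by
  ext n
  rw [Fo, coeff_mk, overpartitionCount_zmod8]
  rw [map_add, map_add, coeff_one]
  rw [show (2 : PowerSeries (ZMod 8)) = C (R := ZMod 8) 2 from (map_ofNat _ 2).symm]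
  rw [show (4 : PowerSeries (ZMod 8)) = C (R := ZMod 8) 4 from (map_ofNat _ 4).symm]
  rw [coeff_C_mul, coeff_C_mul, Dd, Ee, coeff_mk, coeff_mk]

lemma eight_zero : (8 : PowerSeries (ZMod 8)) = 0 := by
  rw [show (8 : PowerSeries (ZMod 8)) = C (R := ZMod 8) 8 from (map_ofNat _ 8).symm]
  rw [show (8 : ZMod 8) = 0 by decide, map_zero]

lemma Bsq : (2 * Dd + 4 * Ee) ^ 2 = 4 * Dd ^ 2 := by
  have h : (2 * Dd + 4 * Ee) ^ 2
      = 4 * Dd ^ 2 + 8 * (2 * Dd * Ee + 2 * Ee ^ 2) := by ring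
  rw [h, eight_zero, zero_mul, add_zero]

lemma Bcube : (2 * Dd + 4 * Ee) ^ 3 = 0 := by
  have h : (2 * Dd + 4 * Ee) ^ 3 = (2 * Dd + 4 * Ee) ^ 2 * (2 * Dd + 4 * Ee) := by ring
  rw [h, Bsq]
  have h2 : 4 * Dd ^ 2 * (2 * Dd + 4 * Ee) = 8 * (Dd ^ 2 * Dd + 2 * (Dd ^ 2 * Ee)) := by ring
  rw [h2, eight_zero, zero_mul]

lemma Fo_pow (t : ℕ) : Fo ^ t = 1 + C (R := ZMod 8) (t : ZMod 8) * (2 * Dd + 4 * Ee)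
    + C (R := ZMod 8) ((t.choose 2 : ℕ) : ZMod 8) * (2 * Dd + 4 * Ee) ^ 2 := by
  induction t with
  | zero => simp
  | succ t ih =>
    rw [pow_succ, ih, Fo_eq]
    have hc : ((t + 1).choose 2 : ℕ) = t.choose 2 + t := by
      rw [show (2:ℕ) = 1 + 1 from rfl, Nat.choose_succ_succ, Nat.choose_one_right]
      simp only [Nat.succ_eq_add_one]
      omega
    rw [hc]
    push_cast
    rw [map_add, map_add, map_one]
    have hB3 := Bcube
    set B := 2 * Dd + 4 * Ee with hB
    linear_combination (C (R := ZMod 8) ((t.choose 2 : ℕ) : ZMod 8)) * hB3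

lemma tuples_coeff (t N : ℕ) :
    ((overpartitionTuples t N : ℕ) : ZMod 8) = coeff (R := ZMod 8) N (Fo ^ t) := by
  rw [overpartitionTuples]
  push_cast
  rw [show Fo ^ t = ∏ _i : Fin t, Fo from by
    rw [Finset.prod_const, Finset.card_univ, Fintype.card_fin]]
  rw [PowerSeries.coeff_prod]
  refine Finset.sum_bij' (fun c _ => Finsupp.equivFunOnFinite.symm c) (fun l _ => ⇑l)
    ?_ ?_ ?_ ?_ ?_
  · intro c hc
    rw [Finset.mem_finsuppAntidiag]
    refine ⟨?_, Finset.subset_univ _⟩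
    rw [Finset.Nat.mem_antidiagonalTuple] at hc
    simpa using hc
  · intro l hl
    rw [Finset.mem_finsuppAntidiag] at hl
    rw [Finset.Nat.mem_antidiagonalTuple]
    simpa using hl.1
  · intro c hc
    ext i
    simp
  · intro l hl
    ext i
    simp
  · intro c hc
    refine Finset.prod_congr rfl fun i _ => ?_
    rw [Fo, coeff_mk]
    simp

lemma even_T {N : ℕ} (hN : N % 8 = 6) :
    Even (∑ x ∈ Finset.HasAntidiagonal.antidiagonal N, x.1.divisors.card * x.2.divisors.card) := by
  have h : ((∑ x ∈ Finset.HasAntidiagonal.antidiagonal N, x.1.divisors.card * x.2.divisors.card : ℕ) : ZMod 2)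
      = 0 := by
    rw [Nat.cast_sum]
    refine Finset.sum_involution (fun x _ => (x.2, x.1)) ?_ ?_ ?_ ?_
    · intro x _
      rw [← Nat.cast_add, ZMod.natCast_eq_zero_iff]
      exact ⟨x.1.divisors.card * x.2.divisors.card, by ring⟩
    · rintro ⟨a, b⟩ hx hne heq
      have hab : b = a := congrArg Prod.fst heq
      subst hab
      apply hne
      rw [Finset.HasAntidiagonal.mem_antidiagonal] at hx
      have ha : b % 4 = 3 := by omega
      rw [ZMod.natCast_eq_zero_iff]
      exact Dvd.dvd.mul_right (even_iff_two_dvd.mp (even_card_divisors_s6 ha)) _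
    · rintro ⟨a, b⟩ hx
      rw [Finset.HasAntidiagonal.mem_antidiagonal] at hx
      show (b, a) ∈ Finset.HasAntidiagonal.antidiagonal N
      rw [Finset.HasAntidiagonal.mem_antidiagonal]
      omega
    · rintro ⟨a, b⟩ _
      rfl
  rw [ZMod.natCast_eq_zero_iff] at h
  exact even_iff_two_dvd.mpr h

theorem overpartitionTuples_eight_n_six_mod_eight (t n : ℕ) :
    overpartitionTuples t (8 * n + 6) ≡ 0 [MOD 8] := by
  set N := 8 * n + 6 with hNdef
  have hN : N % 8 = 6 := by omega
  rw [Nat.modEq_zero_iff_dvd, ← ZMod.natCast_eq_zero_iff]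
  rw [tuples_coeff, Fo_pow]
  rw [map_add, map_add, coeff_one, if_neg (by omega), coeff_C_mul, coeff_C_mul, Bsq]
  have hB : coeff (R := ZMod 8) N (2 * Dd + 4 * Ee) = 0 := by
    rw [map_add]
    rw [show (2 : PowerSeries (ZMod 8)) = C (R := ZMod 8) 2 from (map_ofNat _ 2).symm,
      show (4 : PowerSeries (ZMod 8)) = C (R := ZMod 8) 4 from (map_ofNat _ 4).symm,
      coeff_C_mul, coeff_C_mul, Dd, Ee, coeff_mk, coeff_mk]
    obtain ⟨k, hk⟩ := four_dvd_card_divisors hN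
    obtain ⟨j, hj⟩ := even_card_quadSet (by omega : N % 4 = 2)
    rw [hk, hj]
    push_cast
    ring_nf
    rw [show (8 : ZMod 8) = 0 by decide, mul_zero, mul_zero, add_zero]
  have hD2 : coeff (R := ZMod 8) N (4 * Dd ^ 2) = 0 := by
    rw [show (4 : PowerSeries (ZMod 8)) = C (R := ZMod 8) 4 from (map_ofNat _ 4).symm, coeff_C_mul]
    rw [pow_two, coeff_mul]
    have : ∑ x ∈ Finset.HasAntidiagonal.antidiagonal N, coeff (R := ZMod 8) x.1 Dd * coeff (R := ZMod 8) x.2 Dd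
        = ((∑ x ∈ Finset.HasAntidiagonal.antidiagonal N, x.1.divisors.card * x.2.divisors.card : ℕ) : ZMod 8) := by
      rw [Nat.cast_sum]
      refine Finset.sum_congr rfl fun x _ => ?_
      rw [Dd, coeff_mk, coeff_mk]
      push_cast
      ring
    rw [this]
    obtain ⟨k, hk⟩ := even_T hN
    rw [hk]
    push_cast
    ring_nf
    rw [show (8 : ZMod 8) = 0 by decide, mul_zero]
  rw [hB, hD2, mul_zero, mul_zero, zero_add, add_zero]
end

section
/- For all nonnegative integers t and all n ≥ 0, the number of overpartition t-tuples satisfies p̄_t(8n+7) ≡ 0 (mod 32). -/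
noncomputable section OverpartitionProof

open PowerSeries Finset

abbrev PS : Type := PowerSeries (ZMod 32)

/-- `1 - X^j` -/
def DD (j : ℕ) : PS := 1 - (X : PS) ^ j

/-- inverse of `1 - X^j` for `j ≥ 1` -/
def EE (j : ℕ) : PS := PowerSeries.mk fun m => if j ∣ m then 1 else 0

lemma DD_mul_EE {j : ℕ} (hj : 1 ≤ j) : DD j * EE j = 1 := by
  unfold DD
  rw [sub_mul, one_mul, mul_comm]
  ext n
  rw [map_sub, PowerSeries.coeff_mul_X_pow', coeff_one]
  rcases Nat.eq_zero_or_pos n with rfl | hn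
  · have : ¬ j ≤ 0 := by omega
    simp [EE, this]
  · have hne : ¬ n = 0 := hn.ne'
    simp only [EE, coeff_mk, hne, if_false]
    by_cases hdvd : j ∣ n
    · have hjn : j ≤ n := Nat.le_of_dvd hn hdvd
      have h2 : j ∣ n - j := Nat.dvd_sub hdvd dvd_rfl
      simp [hjn, hdvd, h2]
    · have h2 : ¬ (j ≤ n ∧ j ∣ n - j) := by
        rintro ⟨hle, h⟩
        exact hdvd (by
          have := Nat.dvd_add h (dvd_refl j)
          rwa [Nat.sub_add_cancel hle] at this)
      by_cases hjn : j ≤ n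
      · have : ¬ j ∣ n - j := fun h => h2 ⟨hjn, h⟩
        simp [hdvd, hjn, this]
      · simp [hdvd, hjn]

/-- product of `1 - X^i` over an interval -/
def QD (s : Finset ℕ) : PS := ∏ i ∈ s, DD i
/-- product of inverses `(1-X^j)⁻¹`, `j = 1..r` -/
def QE (r : ℕ) : PS := ∏ j ∈ Icc 1 r, EE j

lemma QD_mul_QE (r : ℕ) : QD (Icc 1 r) * QE r = 1 := by
  unfold QD QE
  rw [← Finset.prod_mul_distrib]
  apply Finset.prod_eq_one
  intro v hv
  exact DD_mul_EE (mem_Icc.mp hv).1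

/-- Gaussian binomial awith the multiplicative definition -/
def B (m r : ℕ) : PS := if r ≤ m then QD (Ioc (m - r) m) * QE r else 0

lemma B_zero (m : ℕ) : B m 0 = 1 := by simp [B, QD, QE]

lemma B_of_gt {m r : ℕ} (h : m < r) : B m r = 0 := by simp [B, Nat.not_le.mpr h]

lemma B_self (m : ℕ) : B m m = 1 := by
  rw [B, if_pos le_rfl, Nat.sub_self]
  have : Ioc 0 m = Icc 1 m := by ext x; simp [Nat.lt_iff_add_one_le]
  rw [this]
  exact QD_mul_QE m

lemma QE_succ (r : ℕ) : QE (r + 1) = QE r * EE (r + 1) := by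
  unfold QE
  rw [Finset.prod_Icc_succ_top (by omega)]

lemma QE_pred {r : ℕ} (hr : 1 ≤ r) : QE (r - 1) = QE r * DD r := by
  obtain ⟨k, rfl⟩ := Nat.exists_eq_add_of_le hr
  rw [add_comm 1 k]
  simp only [Nat.add_sub_cancel]
  rw [QE_succ, mul_comm (QE k), mul_assoc, mul_comm (EE _), mul_assoc, DD_mul_EE (by omega), mul_one]

lemma B_le {m r : ℕ} (h : r ≤ m) : B m r = QD (Ioc (m - r) m) * QE r := by
  rw [B, if_pos (by omega)]

lemma pascal1 (m : ℕ) {r : ℕ} (hr : 1 ≤ r) :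
    B (m + 1) r = B m r + (X : PS) ^ (m + 1 - r) * B m (r - 1) := by
  rcases lt_trichotomy r (m + 1) with hlt | heq | hgt
  · -- r ≤ m
    have hrm : r ≤ m := by omega
    have e0 : m + 1 - (r - 1) = m - r + 2 := by omega
    have e1 : m - (r - 1) = m - r + 1 := by omega
    have e2 : m + 1 - r = m - r + 1 := by omega
    rw [B_le (by omega : r ≤ m + 1), B_le hrm, B_le (by omega : r - 1 ≤ m), e1,
      QE_pred hr, e2]
    have hA1 : Ioc (m - r + 1) (m + 1) = insert (m+1) (Ioc (m - r + 1) m) := by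
      ext x; simp only [mem_Ioc, mem_insert]; omega
    have hA2 : Ioc (m - r) m = insert (m - r + 1) (Ioc (m - r + 1) m) := by
      ext x; simp only [mem_Ioc, mem_insert]; omega
    have hn1 : (m+1) ∉ Ioc (m - r + 1) m := by simp [mem_Ioc]
    have hn2 : (m - r + 1) ∉ Ioc (m - r + 1) m := by simp [mem_Ioc]
    rw [hA1, hA2]
    unfold QD
    rw [Finset.prod_insert hn1, Finset.prod_insert hn2]
    have key : DD (m + 1) = DD (m - r + 1) + (X : PS) ^ (m - r + 1) * DD r := by
      have e3 : (m - r + 1) + r = m + 1 := by omega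
      unfold DD
      rw [← e3, pow_add]
      ring
    set CA : PS := ∏ i ∈ Ioc (m - r + 1) m, DD i
    linear_combination (CA * QE r) * key
  · -- r = m + 1
    subst heq
    rw [B_self, B_of_gt (by omega), Nat.sub_self, Nat.add_sub_cancel, B_self]
    simp
  · -- r > m + 1
    rw [B_of_gt (by omega), B_of_gt (by omega), B_of_gt (by omega)]
    simp

lemma pascal2 (m : ℕ) {r : ℕ} (hr : 1 ≤ r) :
    B (m + 1) r = (X : PS) ^ r * B m r + B m (r - 1) := by
  rcases lt_trichotomy r (m + 1) with hlt | heq | hgt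
  · have hrm : r ≤ m := by omega
    have e1 : m - (r - 1) = m - r + 1 := by omega
    rw [B_le (by omega : r ≤ m + 1), B_le hrm, B_le (by omega : r - 1 ≤ m), e1,
      QE_pred hr]
    have e2 : m + 1 - r = m - r + 1 := by omega
    rw [e2]
    have hA1 : Ioc (m - r + 1) (m + 1) = insert (m+1) (Ioc (m - r + 1) m) := by
      ext x; simp only [mem_Ioc, mem_insert]; omega
    have hA2 : Ioc (m - r) m = insert (m - r + 1) (Ioc (m - r + 1) m) := by
      ext x; simp only [mem_Ioc, mem_insert]; omega
    have hn1 : (m+1) ∉ Ioc (m - r + 1) m := by simp [mem_Ioc]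
    have hn2 : (m - r + 1) ∉ Ioc (m - r + 1) m := by simp [mem_Ioc]
    rw [hA1, hA2]
    unfold QD
    rw [Finset.prod_insert hn1, Finset.prod_insert hn2]
    have key : DD (m + 1) = (X : PS) ^ r * DD (m - r + 1) + DD r := by
      have e3 : r + (m - r + 1) = m + 1 := by omega
      unfold DD
      rw [← e3, pow_add]
      ring
    set CA : PS := ∏ i ∈ Ioc (m - r + 1) m, DD i
    linear_combination (CA * QE r) * key
  · subst heq
    rw [B_self, B_of_gt (by omega), Nat.add_sub_cancel, B_self]
    simp
  · rw [B_of_gt (by omega), B_of_gt (by omega), B_of_gt (by omega)]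
    simp

/-! ## the telescoping sum -/

def esq (n r : ℕ) : ℕ := (n - r)^2 + (r - n)^2

lemma esq_succ_succ (n r : ℕ) : esq (n+1) (r+1) = esq n r := by
  unfold esq
  rw [Nat.succ_sub_succ, Nat.succ_sub_succ]

lemma esq_zero_right (n : ℕ) : esq n 0 = n^2 := by
  unfold esq; simp

lemma esq_succ_one (n : ℕ) : esq (n+1) 1 = n^2 := by
  rw [esq_succ_succ, esq_zero_right]

lemma esq2 {n j : ℕ} (hj : j ≤ 2*n) :
    esq (n+1) (j+2) + 2*(2*n-j) = esq n j + (2*n+1) := by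
  unfold esq
  rcases le_or_gt (j+1) n with h | h
  · obtain ⟨d, rfl⟩ : ∃ d, n = j + 1 + d := ⟨n - (j+1), by omega⟩
    simp only [show j+1+d+1-(j+2) = d by omega, show j+2-(j+1+d+1) = 0 by omega,
      show j+1+d-j = d+1 by omega, show j-(j+1+d) = 0 by omega,
      show 2*(j+1+d)-j = j+2+2*d by omega]
    ring
  · obtain ⟨d, rfl⟩ : ∃ d, j = n + d := ⟨j - n, by omega⟩
    simp only [show n+1-(n+d+2) = 0 by omega, show n+d+2-(n+1) = d+1 by omega,
      show n-(n+d) = 0 by omega, show n+d-n = d by omega,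
      show 2*n-(n+d) = n-d by omega]
    have hd : d ≤ n := by omega
    obtain ⟨e, rfl⟩ : ∃ e, n = d + e := ⟨n - d, by omega⟩
    simp only [show d+e-d = e by omega]
    ring

lemma esq3 {n j : ℕ} (hj : j + 1 ≤ 2*n) :
    esq (n+1) (j+1) + (j+1) = esq (n+1) (j+2) + (2*n-j) := by
  unfold esq
  rcases le_or_gt (j+1) n with h | h
  · obtain ⟨d, rfl⟩ : ∃ d, n = j + 1 + d := ⟨n - (j+1), by omega⟩
    simp only [show j+1+d+1-(j+1) = d+1 by omega, show j+1-(j+1+d+1) = 0 by omega,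
      show j+1+d+1-(j+2) = d by omega, show j+2-(j+1+d+1) = 0 by omega,
      show 2*(j+1+d)-j = j+2+2*d by omega]
    ring
  · obtain ⟨d, rfl⟩ : ∃ d, j = n + d := ⟨j - n, by omega⟩
    simp only [show n+1-(n+d+1) = 0 by omega, show n+d+1-(n+1) = d by omega,
      show n+1-(n+d+2) = 0 by omega, show n+d+2-(n+1) = d+1 by omega,
      show 2*n-(n+d) = n-d by omega]
    have hd : d + 1 ≤ n := by omega
    obtain ⟨e, rfl⟩ : ∃ e, n = d + 1 + e := ⟨n - (d+1), by omega⟩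
    simp only [show d+1+e-d = e+1 by omega]
    ring

def trm (n r : ℕ) : PS := (-1 : PS)^(n+r) * (X : PS)^(esq n r) * B (2*n) r

def SS (n : ℕ) : PS := ∑ r ∈ range (2*n+1), trm n r

def ww (n r : ℕ) : PS := (-1 : PS)^(n+1+r) * (X : PS)^(esq (n+1) r + r) * B (2*n) r

lemma Bdec (n j : ℕ) : B (2*n+2) (j+2)
    = (X:PS)^(j+2) * B (2*n) (j+2) + B (2*n) (j+1)
      + (X:PS)^(2*n-j) * B (2*n) (j+1) + (X:PS)^(2*n-j) * ((X:PS)^(2*n-j) * B (2*n) j) := by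
  have h1 : B (2*n+2) (j+2) = B (2*n+1) (j+2) + (X:PS)^(2*n-j) * B (2*n+1) (j+1) := by
    have h := pascal1 (2*n+1) (r := j+2) (by omega)
    rw [show 2*n+1+1 = 2*n+2 by ring, show 2*n+1+1-(j+2) = 2*n-j by omega,
      show j+2-1 = j+1 by omega] at h
    exact h
  have h2 : B (2*n+1) (j+2) = (X:PS)^(j+2) * B (2*n) (j+2) + B (2*n) (j+1) := by
    have h := pascal2 (2*n) (r := j+2) (by omega)
    rw [show j+2-1 = j+1 by omega] at h
    exact h
  have h3 : B (2*n+1) (j+1) = B (2*n) (j+1) + (X:PS)^(2*n-j) * B (2*n) j := by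
    have h := pascal1 (2*n) (r := j+1) (by omega)
    rw [show 2*n+1-(j+1) = 2*n-j by omega, show j+1-1 = j by omega] at h
    exact h
  rw [h1, h2, h3]
  ring

lemma hsplit (n : ℕ) {j : ℕ} (hj : j ≤ 2*n) :
    (-1 : PS)^(n+1+(j+2)) * (X : PS)^(esq (n+1) (j+2)) * B (2*n+2) (j+2)
      = ww n (j+2) + trm n (j+1) - ww n (j+1) - (X:PS)^(2*n+1) * trm n j := by
  rw [Bdec]
  unfold ww trm
  have s1 : (-1 : PS)^(n+1+(j+2)) = (-1:PS)^(n+(j+1)) := by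
    rw [show n+1+(j+2) = (n+(j+1))+2 by ring, pow_add]; norm_num
  have s2 : (-1 : PS)^(n+1+(j+1)) = -(-1:PS)^(n+(j+1)) := by
    rw [show n+1+(j+1) = (n+(j+1))+1 by ring, pow_succ]; ring
  have s3 : (-1 : PS)^(n+j) = (-1:PS)^(n+(j+1)) * (-1) := by
    rw [show n+(j+1) = (n+j)+1 by ring, pow_succ]; ring
  have e1 : (X:PS)^(esq (n+1) (j+2) + (j+2)) = (X:PS)^(esq (n+1) (j+2)) * (X:PS)^(j+2) := by
    rw [pow_add]
  have e2 : esq n (j+1) = esq (n+1) (j+2) := (esq_succ_succ n (j+1)).symm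
  rw [s1, s2, s3, e1, e2]
  have e4 : (X:PS)^(2*n+1) * (X:PS)^(esq n j)
      = (X:PS)^(esq (n+1) (j+2)) * ((X:PS)^(2*n-j) * (X:PS)^(2*n-j)) := by
    rw [← pow_add, ← pow_add, ← pow_add]
    congr 1
    have := esq2 (n := n) (j := j) hj
    omega
  rcases lt_or_eq_of_le hj with hlt | heq
  · have e3 : (X:PS)^(esq (n+1) (j+1) + (j+1))
        = (X:PS)^(esq (n+1) (j+2)) * (X:PS)^(2*n-j) := by
      rw [← pow_add, esq3 (by omega)]
    rw [e3]
    linear_combination (-((-1:PS)^(n+(j+1)) * B (2*n) j)) * e4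
  · subst heq
    rw [B_of_gt (show 2*n < 2*n+1 by omega), B_of_gt (show 2*n < 2*n+2 by omega)]
    linear_combination (-((-1:PS)^(n+(2*n+1)) * B (2*n) (2*n))) * e4

lemma trm_zero_top (n : ℕ) : trm n (2*n+1) = 0 := by
  unfold trm; rw [B_of_gt (by omega)]; ring

lemma ww_zero {n r : ℕ} (h : 2*n < r) : ww n r = 0 := by
  unfold ww; rw [B_of_gt h]; ring

lemma B_one (m : ℕ) : B m 1 = DD m * EE 1 := by
  rcases Nat.eq_zero_or_pos m with rfl | hm
  · rw [B_of_gt (by omega)]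
    unfold DD
    rw [pow_zero, sub_self, zero_mul]
  rw [B_le hm]
  have h1 : Ioc (m-1) m = {m} := by ext x; simp only [mem_Ioc, mem_singleton]; omega
  have h2 : QE 1 = EE 1 := by unfold QE; rw [Finset.Icc_self, Finset.prod_singleton]
  rw [h1, h2]; unfold QD; rw [Finset.prod_singleton]

lemma B_one_rec (n : ℕ) : B (2*n+2) 1 = 1 + (X:PS) * B (2*n) 1 + (X:PS)^(2*n+1) := by
  have p1 : (X:PS)^(2*n+1) = (X:PS)^(2*n) * X := by rw [pow_succ]
  have p2 : (X:PS)^(2*n+2) = (X:PS)^(2*n) * X * X := by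
    rw [show 2*n+2 = (2*n+1)+1 by ring, pow_succ, p1]
  have hcan : DD 1 * B (2*n+2) 1 = DD 1 * (1 + (X:PS) * B (2*n) 1 + (X:PS)^(2*n+1)) := by
    rw [B_one, B_one,
      show DD 1 * (DD (2*n+2) * EE 1) = DD (2*n+2) * (DD 1 * EE 1) by ring,
      DD_mul_EE le_rfl, mul_one, mul_add, mul_add,
      show DD 1 * ((X:PS) * (DD (2*n) * EE 1)) = (X:PS) * DD (2*n) * (DD 1 * EE 1) by ring,
      DD_mul_EE le_rfl, mul_one]
    unfold DD
    rw [p1, p2, pow_one]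
    ring
  calc B (2*n+2) 1 = (DD 1 * EE 1) * B (2*n+2) 1 := by rw [DD_mul_EE le_rfl, one_mul]

    _ = EE 1 * (DD 1 * B (2*n+2) 1) := by ring
    _ = EE 1 * (DD 1 * (1 + (X:PS) * B (2*n) 1 + (X:PS)^(2*n+1))) := by rw [hcan]
    _ = (DD 1 * EE 1) * (1 + (X:PS) * B (2*n) 1 + (X:PS)^(2*n+1)) := by ring
    _ = _ := by rw [DD_mul_EE le_rfl, one_mul]

lemma esq_top (n : ℕ) : esq (n+1) 0 = n^2 + (2*n+1) := by
  rw [esq_zero_right]; ring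

lemma edge (n : ℕ) : trm (n+1) 0 + trm (n+1) 1 = trm n 0 + ww n 1 := by
  unfold trm ww
  rw [esq_top, esq_succ_one, esq_zero_right, B_zero, B_zero,
    show 2*(n+1) = 2*n+2 by ring, B_one_rec]
  have s1 : (-1:PS)^(n+1+0) = -(-1:PS)^n := by rw [Nat.add_zero, pow_succ]; ring
  have s2 : (-1:PS)^(n+1+1) = (-1:PS)^n := by
    rw [show n+1+1 = n+2 by ring, pow_add]; norm_num
  have s3 : (-1:PS)^(n+0) = (-1:PS)^n := by rw [Nat.add_zero]
  have p1 : (X:PS)^(n^2+(2*n+1)) = (X:PS)^(n^2) * (X:PS)^(2*n+1) := by rw [pow_add]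
  have p2 : (X:PS)^(n^2+1) = (X:PS)^(n^2) * X := by rw [pow_succ]
  rw [s1, s2, s3, p1, p2]
  ring

lemma SS_step (n : ℕ) : SS (n+1) = DD (2*n+1) * SS n := by
  unfold SS
  rw [show 2*(n+1)+1 = (2*n+1+1)+1 by ring,
    Finset.sum_range_succ', Finset.sum_range_succ']
  simp only [show ∀ m : ℕ, m + 1 + 1 = m + 2 from fun m => rfl, Nat.zero_add]
  have hterm : ∀ j ∈ range (2*n+1), trm (n+1) (j+2)
      = ww n (j+2) + trm n (j+1) - ww n (j+1) - (X:PS)^(2*n+1) * trm n j := by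
    intro j hj
    have hj' : j ≤ 2*n := by
      have := mem_range.mp hj; omega
    have h := hsplit n hj'
    unfold trm
    rw [show 2*(n+1) = 2*n+2 by ring]
    exact h
  rw [Finset.sum_congr rfl hterm]
  rw [Finset.sum_sub_distrib, Finset.sum_sub_distrib, Finset.sum_add_distrib,
    ← Finset.mul_sum]
  have h1 : (∑ j ∈ range (2*n+1), ww n (j+2)) + ww n 1
      = (∑ j ∈ range (2*n+1), ww n (j+1)) := by
    have a1 := Finset.sum_range_succ' (fun r => ww n (r+1)) (2*n+1)
    have a2 := Finset.sum_range_succ (fun r => ww n (r+1)) (2*n+1)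
    simp only [show ∀ m : ℕ, m + 1 + 1 = m + 2 from fun m => rfl, Nat.zero_add] at a1 a2
    have a3 : ww n (2*n+1+1) = 0 := ww_zero (by omega)
    rw [a3, add_zero] at a2
    rw [← a2, a1]
  have h2 : (∑ j ∈ range (2*n+1), trm n (j+1)) + trm n 0 = SS n := by
    have a1 := Finset.sum_range_succ' (trm n) (2*n+1)
    have a2 := Finset.sum_range_succ (trm n) (2*n+1)
    have a3 : trm n (2*n+1) = 0 := trm_zero_top n
    rw [a3, add_zero] at a2
    unfold SS
    rw [← a2, a1]
  have he := edge n
  unfold DD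
  unfold SS at h2
  linear_combination he + h1 + h2

def OddP (n : ℕ) : PS := ∏ j ∈ range n, DD (2*j+1)

lemma SS_eq (n : ℕ) : SS n = OddP n := by
  induction n with
  | zero =>
    unfold SS OddP trm
    simp [esq, B_zero]
  | succ k ih =>
    rw [SS_step, ih]
    unfold OddP
    rw [Finset.prod_range_succ]
    ring

/-! ## truncated congruence -/

def apx (L : ℕ) (f g : PS) : Prop := ∀ i ≤ L, (coeff i) f = (coeff i) g

lemma apx_refl (L : ℕ) (f : PS) : apx L f f := fun _ _ => rfl

lemma apx_symm {L f g} (h : apx L f g) : apx L g f := fun i hi => (h i hi).symm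

lemma apx_trans {L f g h} (h1 : apx L f g) (h2 : apx L g h) : apx L f h :=
  fun i hi => (h1 i hi).trans (h2 i hi)

lemma apx_of_eq {L : ℕ} {f g : PS} (h : f = g) : apx L f g := by subst h; exact apx_refl L f

lemma apx_mul {L} {f f' g g' : PS} (hf : apx L f f') (hg : apx L g g') :
    apx L (f * g) (f' * g') := by
  intro i hi
  rw [coeff_mul, coeff_mul]
  apply Finset.sum_congr rfl
  intro p hp
  have hp' : p.1 + p.2 = i := Finset.HasAntidiagonal.mem_antidiagonal.mp hp
  rw [hf p.1 (by omega), hg p.2 (by omega)]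

lemma apx_pow {L} {f g : PS} (h : apx L f g) (t : ℕ) : apx L (f ^ t) (g ^ t) := by
  induction t with
  | zero => simpa using apx_refl L 1
  | succ k ih =>
    rw [pow_succ, pow_succ]
    exact apx_mul ih h

lemma apx_prod_one {L} {s : Finset ℕ} {F : ℕ → PS} (h : ∀ v ∈ s, apx L (F v) 1) :
    apx L (∏ v ∈ s, F v) 1 := by
  classical
  induction s using Finset.induction_on with
  | empty => simpa using apx_refl L 1
  | @insert a s' hx ih =>
    rw [Finset.prod_insert hx]
    have := apx_mul (h a (mem_insert_self a s')) (ih fun v hv => h v (mem_insert_of_mem hv))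
    simpa using this

lemma apx_sum {L} {s : Finset ℕ} {F G : ℕ → PS} (h : ∀ v ∈ s, apx L (F v) (G v)) :
    apx L (∑ v ∈ s, F v) (∑ v ∈ s, G v) := by
  intro i hi
  rw [map_sum, map_sum]
  exact Finset.sum_congr rfl fun v hv => h v hv i hi

lemma apx_X_pow_mul {L e} {f g : PS} (h : apx (L - e) f g) :
    apx L ((X:PS)^e * f) ((X:PS)^e * g) := by
  intro i hi
  rw [coeff_X_pow_mul', coeff_X_pow_mul']
  by_cases he : e ≤ i
  · rw [if_pos he, if_pos he, h (i - e) (by omega)]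
  · rw [if_neg he, if_neg he]

lemma apx_X_pow_zero {L e : ℕ} {f : PS} (he : L < e) : apx L ((X:PS)^e * f) 0 := by
  intro i hi
  rw [coeff_X_pow_mul', if_neg (by omega), map_zero]

/-! ## part 5 -/

lemma DD_apx_one {L j : ℕ} (h : L < j) : apx L (DD j) 1 := by
  intro i hi
  unfold DD
  rw [map_sub, coeff_X_pow, if_neg (by omega), sub_zero]

lemma BP (Nn r : ℕ) (hr : r ≤ 2*Nn) :
    B (2*Nn) r * QD (Icc 1 (2*Nn)) = QD (Ioc (2*Nn - r) (2*Nn)) * QD (Ioc r (2*Nn)) := by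
  rw [B_le hr]
  have hsp : Icc 1 (2*Nn) = Icc 1 r ∪ Ioc r (2*Nn) := by
    ext x; simp only [mem_Icc, mem_union, mem_Ioc]; omega
  have hdis : Disjoint (Icc 1 r) (Ioc r (2*Nn)) := by
    rw [Finset.disjoint_left]
    intro x hx hx'
    have := mem_Icc.mp hx; have := mem_Ioc.mp hx'; omega
  have : QD (Icc 1 (2*Nn)) = QD (Icc 1 r) * QD (Ioc r (2*Nn)) := by
    unfold QD; rw [hsp, Finset.prod_union hdis]
  rw [this, show QD (Ioc (2*Nn - r) (2*Nn)) * QE r * (QD (Icc 1 r) * QD (Ioc r (2*Nn)))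
    = (QD (Icc 1 r) * QE r) * (QD (Ioc (2*Nn - r) (2*Nn)) * QD (Ioc r (2*Nn))) by ring,
    QD_mul_QE, one_mul]

lemma esq_le1 {Nn r : ℕ} (h : r ≤ 2*Nn) :
    Nn ≤ esq Nn r + r ∧ Nn ≤ esq Nn r + (2*Nn - r) := by
  unfold esq
  have h1 : Nn - r ≤ (Nn - r)^2 := Nat.le_self_pow (by norm_num) _
  have h2 : r - Nn ≤ (r - Nn)^2 := Nat.le_self_pow (by norm_num) _
  generalize (Nn - r)^2 = A at h1 ⊢
  generalize (r - Nn)^2 = C at h2 ⊢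
  omega

def Phi (n : ℕ) : PS := ∑ r ∈ range (2*n+1), (-1:PS)^(n+r) * (X:PS)^(esq n r)

lemma Phi_apx (Nn : ℕ) : apx Nn (Phi Nn) (OddP Nn * QD (Icc 1 (2*Nn))) := by
  have hS : SS Nn * QD (Icc 1 (2*Nn)) = OddP Nn * QD (Icc 1 (2*Nn)) := by rw [SS_eq]
  rw [← hS]
  unfold SS Phi
  rw [Finset.sum_mul]
  apply apx_symm
  apply apx_sum
  intro r hr
  have hr' : r ≤ 2*Nn := by have := mem_range.mp hr; omega
  unfold trm
  have key : apx (Nn - esq Nn r) (B (2*Nn) r * QD (Icc 1 (2*Nn))) 1 := by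
    rw [BP Nn r hr']
    have hle := esq_le1 (Nn := Nn) (r := r) hr'
    refine apx_trans (apx_mul (apx_prod_one ?_) (apx_prod_one ?_)) (apx_of_eq (one_mul 1))
    · intro v hv
      apply DD_apx_one
      have hv' := mem_Ioc.mp hv
      omega
    · intro v hv
      apply DD_apx_one
      have hv' := mem_Ioc.mp hv
      omega
  have h2 : apx Nn ((X:PS)^(esq Nn r) * (B (2*Nn) r * QD (Icc 1 (2*Nn))))
      ((X:PS)^(esq Nn r) * 1) := apx_X_pow_mul key
  have h3 := apx_mul (apx_refl Nn ((-1:PS)^(Nn+r))) h2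
  refine apx_trans (apx_of_eq (by ring)) (apx_trans h3 (apx_of_eq (by ring)))

def hfac (v : ℕ) : PS := PowerSeries.mk fun m => if m = 0 then 1 else if v ∣ m then 2 else 0

lemma hfac_eq {v : ℕ} (hv : 1 ≤ v) : hfac v = (1 + (X:PS)^v) * EE v := by
  ext m
  rw [add_mul, one_mul, map_add, coeff_X_pow_mul']
  rcases Nat.eq_zero_or_pos m with rfl | hm
  · have : ¬ v ≤ 0 := by omega
    simp [hfac, EE, this]
  · have hne : ¬ m = 0 := hm.ne'
    simp only [hfac, EE, coeff_mk, hne, if_false]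
    by_cases hdvd : v ∣ m
    · have hvm : v ≤ m := Nat.le_of_dvd hm hdvd
      have h2 : v ∣ m - v := Nat.dvd_sub hdvd dvd_rfl
      simp [hvm, hdvd, h2]
      norm_num
    · have h2 : ¬ (v ≤ m ∧ v ∣ m - v) := by
        rintro ⟨hle, h⟩
        exact hdvd (by
          have := Nat.dvd_add h (dvd_refl v)
          rwa [Nat.sub_add_cancel hle] at this)
      by_cases hvm : v ≤ m
      · have : ¬ v ∣ m - v := fun h => h2 ⟨hvm, h⟩
        simp [hdvd, hvm, this]
      · simp [hdvd, hvm]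

def Hb (Nn : ℕ) : PS := ∏ v ∈ Icc 1 Nn, hfac v

lemma oddsplit (m : ℕ) : QD (Icc 1 (2*m)) = OddP m * ∏ v ∈ Icc 1 m, DD (2*v) := by
  induction m with
  | zero => simp [QD, OddP]
  | succ k ih =>
    have h1 : Icc 1 (2*(k+1)) = insert (2*k+2) (insert (2*k+1) (Icc 1 (2*k))) := by
      ext x; simp only [mem_Icc, mem_insert]; omega
    have h2 : Icc 1 (k+1) = insert (k+1) (Icc 1 k) := by
      ext x; simp only [mem_Icc, mem_insert]; omega
    have hn1 : (2*k+2) ∉ insert (2*k+1) (Icc 1 (2*k)) := by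
      simp only [mem_insert, mem_Icc]; omega
    have hn2 : (2*k+1) ∉ Icc 1 (2*k) := by simp only [mem_Icc]; omega
    have hn3 : (k+1) ∉ Icc 1 k := by simp only [mem_Icc]; omega
    unfold QD at *
    rw [h1, h2, Finset.prod_insert hn1, Finset.prod_insert hn2, Finset.prod_insert hn3, ih]
    unfold OddP
    rw [Finset.prod_range_succ, show 2*(k+1) = 2*k+2 by ring]
    ring

lemma PhiH (Nn : ℕ) : apx Nn (Phi Nn * Hb Nn) 1 := by
  have hH : Hb Nn = (∏ v ∈ Icc 1 Nn, (1 + (X:PS)^v)) * QE Nn := by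
    unfold Hb QE
    rw [← Finset.prod_mul_distrib]
    exact prod_congr rfl (fun v hv => hfac_eq (mem_Icc.mp hv).1)
  have hC1 : (∏ v ∈ Icc 1 Nn, (1 + (X:PS)^v)) * QD (Icc 1 Nn)
      = ∏ v ∈ Icc 1 Nn, DD (2*v) := by
    unfold QD
    rw [← Finset.prod_mul_distrib]
    apply prod_congr rfl
    intro v hv
    unfold DD
    rw [two_mul, pow_add]
    ring
  have hP : (∏ v ∈ Icc 1 Nn, (1 + (X:PS)^v)) = (∏ v ∈ Icc 1 Nn, DD (2*v)) * QE Nn := by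
    calc (∏ v ∈ Icc 1 Nn, (1 + (X:PS)^v))
        = (∏ v ∈ Icc 1 Nn, (1 + (X:PS)^v)) * (QD (Icc 1 Nn) * QE Nn) := by
          rw [QD_mul_QE, mul_one]
      _ = ((∏ v ∈ Icc 1 Nn, (1 + (X:PS)^v)) * QD (Icc 1 Nn)) * QE Nn := by ring
      _ = _ := by rw [hC1]
  have hPsi : QD (Icc 1 (2*Nn)) * QE Nn = QD (Ioc Nn (2*Nn)) := by
    have hsp : Icc 1 (2*Nn) = Icc 1 Nn ∪ Ioc Nn (2*Nn) := by
      ext x; simp only [mem_Icc, mem_union, mem_Ioc]; omega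
    have hdis : Disjoint (Icc 1 Nn) (Ioc Nn (2*Nn)) := by
      rw [Finset.disjoint_left]
      intro x hx hx'
      have := mem_Icc.mp hx; have := mem_Ioc.mp hx'; omega
    have : QD (Icc 1 (2*Nn)) = QD (Icc 1 Nn) * QD (Ioc Nn (2*Nn)) := by
      unfold QD; rw [hsp, Finset.prod_union hdis]
    rw [this, show QD (Icc 1 Nn) * QD (Ioc Nn (2*Nn)) * QE Nn
      = (QD (Icc 1 Nn) * QE Nn) * QD (Ioc Nn (2*Nn)) by ring, QD_mul_QE, one_mul]
  have hPsiApx : apx Nn (QD (Ioc Nn (2*Nn))) 1 := by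
    apply apx_prod_one
    intro v hv
    exact DD_apx_one (mem_Ioc.mp hv).1
  have h1 : apx Nn (Phi Nn * Hb Nn) ((OddP Nn * QD (Icc 1 (2*Nn))) * Hb Nn) :=
    apx_mul (Phi_apx Nn) (apx_refl _ _)
  have h2 : (OddP Nn * QD (Icc 1 (2*Nn))) * Hb Nn
      = (QD (Icc 1 (2*Nn)) * QE Nn) * (QD (Icc 1 (2*Nn)) * QE Nn) := by
    rw [hH, hP, oddsplit]
    ring
  refine apx_trans h1 (apx_trans (apx_of_eq h2) ?_)
  rw [hPsi]
  exact apx_trans (apx_mul hPsiApx hPsiApx) (apx_of_eq (one_mul 1))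

/-! ## part 6 : Phi = 1 - 2a, J-expansion, squares mod 8 -/

local notation "C'" => (PowerSeries.C (R := ZMod 32))

def aser (n : ℕ) : PS := ∑ k ∈ Icc 1 n, C' ((-1)^(k+1)) * (X:PS)^(k^2)

lemma Phi_fold (n : ℕ) : Phi n = 1 - 2 * aser n := by
  induction n with
  | zero =>
    unfold Phi aser
    simp [esq]
  | succ k ih =>
    have hstep : Phi (k+1) = Phi k + 2 * ((-1:PS)^(k+1) * (X:PS)^((k+1)^2)) := by
      unfold Phi
      rw [show 2*(k+1)+1 = (2*k+1)+1+1 by ring, Finset.sum_range_succ,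
        Finset.sum_range_succ']
      have hmid : ∀ j, (-1:PS)^(k+1+(j+1)) * (X:PS)^(esq (k+1) (j+1))
          = (-1:PS)^(k+j) * (X:PS)^(esq k j) := by
        intro j
        rw [esq_succ_succ, show k+1+(j+1) = (k+j)+2 by ring, pow_add]
        norm_num
      rw [Finset.sum_congr rfl (fun j _ => hmid j)]
      have h0 : (-1:PS)^(k+1+0) * (X:PS)^(esq (k+1) 0) = (-1:PS)^(k+1) * (X:PS)^((k+1)^2) := by
        rw [Nat.add_zero, esq_zero_right]
      have htop : (-1:PS)^(k+1+(2*k+1+1)) * (X:PS)^(esq (k+1) (2*k+1+1))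
          = (-1:PS)^(k+1) * (X:PS)^((k+1)^2) := by
        have he : esq (k+1) (2*k+1+1) = (k+1)^2 := by
          unfold esq
          rw [show (k+1) - (2*k+1+1) = 0 by omega, show (2*k+1+1) - (k+1) = k+1 by omega]
          ring
        rw [he, show k+1+(2*k+1+1) = (k+1) + 2*(k+1) by ring, pow_add, pow_mul]
        norm_num
      rw [h0, htop]
      ring
    have haser : aser (k+1) = aser k + C' ((-1)^(k+1+1)) * (X:PS)^((k+1)^2) := by
      unfold aser
      rw [Finset.sum_Icc_succ_top (by omega : 1 ≤ k+1)]
    have hc : C' ((-1)^(k+1+1)) = (-1:PS)^(k+1+1) := by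
      rw [map_pow, map_neg, map_one]
    rw [hstep, ih, haser, hc, pow_succ]
    ring

def Jser (n : ℕ) : PS :=
  1 + 2*aser n + 4*(aser n)^2 + 8*(aser n)^3 + 16*(aser n)^4

lemma h32 : (32 : PS) = 0 := by
  have h : (32 : PS) = C' (32 : ZMod 32) := by rw [map_ofNat]
  rw [h, show (32 : ZMod 32) = 0 by decide, map_zero]

lemma PhiJ (n : ℕ) : Phi n * Jser n = 1 := by
  rw [Phi_fold]
  unfold Jser
  linear_combination (-((aser n)^5)) * h32

lemma Hb_apx_J (Nn : ℕ) : apx Nn (Hb Nn) (Jser Nn) := by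
  have h1 : apx Nn (Jser Nn * (Phi Nn * Hb Nn)) (Jser Nn * 1) :=
    apx_mul (apx_refl _ _) (PhiH Nn)
  have h2 : Jser Nn * (Phi Nn * Hb Nn) = Hb Nn := by
    rw [show Jser Nn * (Phi Nn * Hb Nn) = (Phi Nn * Jser Nn) * Hb Nn by ring, PhiJ, one_mul]
  exact apx_trans (apx_of_eq h2.symm) (apx_trans h1 (apx_of_eq (mul_one _)))

lemma Jpow (n t : ℕ) : ∃ c1 c2 c3 c4 : ZMod 32, (Jser n)^t
    = 1 + 2 * C' c1 * aser n + 4 * C' c2 * (aser n)^2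
      + 8 * C' c3 * (aser n)^3 + 16 * C' c4 * (aser n)^4 := by
  induction t with
  | zero => exact ⟨0,0,0,0, by simp⟩
  | succ k ih =>
    obtain ⟨c1,c2,c3,c4, h⟩ := ih
    refine ⟨c1+1, c2+c1+1, c3+c2+c1+1, c4+c3+c2+c1+1, ?_⟩
    rw [pow_succ, h]
    unfold Jser
    simp only [map_add, map_one]
    linear_combination ((C' c1 + C' c2 + C' c3 + C' c4) * (aser n)^5
      + 2*(C' c2 + C' c3 + C' c4) * (aser n)^6 + 4*(C' c3 + C' c4)*(aser n)^7
      + 8*(C' c4)*(aser n)^8) * h32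

lemma sq_mod8 (k : ℕ) : k^2 % 8 = 0 ∨ k^2 % 8 = 1 ∨ k^2 % 8 = 4 := by
  obtain ⟨q, r, hr, rfl⟩ : ∃ q r, r < 4 ∧ k = 4*q + r :=
    ⟨k/4, k%4, Nat.mod_lt _ (by norm_num), by omega⟩
  have h : (4*q + r)^2 = r^2 + 8*(2*q^2 + q*r) := by ring
  rw [h, Nat.add_mul_mod_self_left]
  interval_cases r <;> decide

lemma aser_supp {n m : ℕ} (h : (coeff m) (aser n) ≠ 0) : ∃ k, m = k^2 := by
  unfold aser at h
  rw [map_sum] at h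
  obtain ⟨k, _, hne⟩ := Finset.exists_ne_zero_of_sum_ne_zero h
  rw [coeff_C_mul, coeff_X_pow] at hne
  by_cases hm : m = k^2
  · exact ⟨k, hm⟩
  · rw [if_neg hm, mul_zero] at hne
    exact absurd rfl hne

section NN
variable {Nn : ℕ} (hN : Nn % 8 = 7)
include hN

lemma coeff_a1 : (coeff Nn) (aser Nn) = 0 := by
  by_contra h
  obtain ⟨k, hk⟩ := aser_supp h
  have := sq_mod8 k
  omega

lemma coeff_a2 : (coeff Nn) ((aser Nn)^2) = 0 := by
  rw [pow_two, coeff_mul]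
  apply Finset.sum_eq_zero
  intro p hp
  have hp' : p.1 + p.2 = Nn := Finset.HasAntidiagonal.mem_antidiagonal.mp hp
  by_contra h
  have h1 : (coeff p.1) (aser Nn) ≠ 0 := fun h0 => h (by rw [h0, zero_mul])
  have h2 : (coeff p.2) (aser Nn) ≠ 0 := fun h0 => h (by rw [h0, mul_zero])
  obtain ⟨k, hk⟩ := aser_supp h1
  obtain ⟨l, hl⟩ := aser_supp h2
  have s1 := sq_mod8 k
  have s2 := sq_mod8 l
  omega

lemma coeff_a3 : (coeff Nn) ((aser Nn)^3) = 0 := by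
  rw [pow_succ, coeff_mul]
  apply Finset.sum_eq_zero
  intro p hp
  have hp' : p.1 + p.2 = Nn := Finset.HasAntidiagonal.mem_antidiagonal.mp hp
  by_contra h
  have h1 : (coeff p.1) ((aser Nn)^2) ≠ 0 := fun h0 => h (by rw [h0, zero_mul])
  have h2 : (coeff p.2) (aser Nn) ≠ 0 := fun h0 => h (by rw [h0, mul_zero])
  obtain ⟨m, hm⟩ := aser_supp h2
  -- support of a^2
  rw [pow_two, coeff_mul] at h1
  obtain ⟨q, hq, hqne⟩ := Finset.exists_ne_zero_of_sum_ne_zero h1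
  have hq' : q.1 + q.2 = p.1 := Finset.HasAntidiagonal.mem_antidiagonal.mp hq
  have h3 : (coeff q.1) (aser Nn) ≠ 0 := fun h0 => hqne (by rw [h0, zero_mul])
  have h4 : (coeff q.2) (aser Nn) ≠ 0 := fun h0 => hqne (by rw [h0, mul_zero])
  obtain ⟨k, hk⟩ := aser_supp h3
  obtain ⟨l, hl⟩ := aser_supp h4
  have s1 := sq_mod8 k
  have s2 := sq_mod8 l
  have s3 := sq_mod8 m
  omega

end NN

/-! parity of the coefficient of `a^4` via `ZMod 2` -/

abbrev PS2 : Type := PowerSeries (ZMod 2)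

def pr : PS →+* PS2 := PowerSeries.map (ZMod.castHom (by norm_num : (2:ℕ) ∣ 32) (ZMod 2))

instance : CharP PS2 2 :=
  charP_of_injective_ringHom (f := (PowerSeries.C (R := ZMod 2) : ZMod 2 →+* PS2))
    (fun a b h => by simpa using congrArg (PowerSeries.constantCoeff (R := ZMod 2)) h) 2

lemma pr_aser (n : ℕ) : pr (aser n) = ∑ k ∈ Icc 1 n, (X:PS2)^(k^2) := by
  unfold aser pr
  rw [map_sum]
  apply Finset.sum_congr rfl
  intro k _
  have hsc : (PowerSeries.C (R := ZMod 2))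
      ((ZMod.castHom (by norm_num : (2:ℕ) ∣ 32) (ZMod 2)) ((-1)^(k+1))) = 1 := by
    rw [map_pow, map_neg, map_one, show (-1 : ZMod 2) = 1 by decide, one_pow, map_one]
  rw [map_mul, PowerSeries.map_C, hsc, one_mul, map_pow, PowerSeries.map_X]

lemma coeff_a4_even {Nn : ℕ} (hN : Nn % 8 = 7) :
    (ZMod.castHom (by norm_num : (2:ℕ) ∣ 32) (ZMod 2)) ((coeff Nn) ((aser Nn)^4)) = 0 := by
  have hmap : (PowerSeries.coeff (R := ZMod 2) Nn) (pr ((aser Nn)^4))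
      = (ZMod.castHom (by norm_num : (2:ℕ) ∣ 32) (ZMod 2)) ((coeff Nn) ((aser Nn)^4)) := by
    unfold pr
    rw [PowerSeries.coeff_map]
  rw [← hmap, map_pow, pr_aser]
  haveI : Fact (Nat.Prime 2) := ⟨Nat.prime_two⟩
  have hfr : (∑ k ∈ Icc 1 Nn, (X:PS2)^(k^2))^4
      = ∑ k ∈ Icc 1 Nn, (X:PS2)^(4*(k^2)) := by
    rw [show (4:ℕ) = 2*2 by norm_num, pow_mul, sum_pow_char, sum_pow_char]
    apply Finset.sum_congr rfl
    intro k _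
    rw [← pow_mul, ← pow_mul]
    ring_nf
  rw [hfr, map_sum]
  apply Finset.sum_eq_zero
  intro k _
  rw [PowerSeries.coeff_X_pow, if_neg (by omega)]

lemma zmod_kill {x : ZMod 32}
    (h : (ZMod.castHom (by norm_num : (2:ℕ) ∣ 32) (ZMod 2)) x = 0) : 16 * x = 0 := by
  revert h
  revert x
  decide

/-! ## part 7: combinatorial GF -/

lemma coeff_hfac_zero (v : ℕ) : (coeff 0) (hfac v) = 1 := by
  unfold hfac; rw [coeff_mk]; simp

lemma coeff_hfac_dvd {v m : ℕ} (hm : m ≠ 0) (h : v ∣ m) : (coeff m) (hfac v) = 2 := by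
  unfold hfac; rw [coeff_mk, if_neg hm, if_pos h]

lemma coeff_hfac_ndvd {v m : ℕ} (hm : m ≠ 0) (h : ¬ v ∣ m) : (coeff m) (hfac v) = 0 := by
  unfold hfac; rw [coeff_mk, if_neg hm, if_neg h]

/-- parts multiset from a divisor-compatible finsupp -/
def partsOf (l : ℕ →₀ ℕ) : Multiset ℕ := ∑ v ∈ l.support, Multiset.replicate (l v / v) v

def finOf {k : ℕ} (p : k.Partition) : ℕ →₀ ℕ :=
  Finsupp.onFinset p.parts.toFinset (fun v => v * p.parts.count v)
    (fun v h => by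
      rw [Multiset.mem_toFinset, ← Multiset.count_pos]
      by_contra hc
      push_neg at hc
      have : p.parts.count v = 0 := by omega
      simp [this] at h)

lemma multiset_sum_sum (s : Finset ℕ) (f : ℕ → Multiset ℕ) :
    (∑ v ∈ s, f v).sum = ∑ v ∈ s, (f v).sum := by
  classical
  induction s using Finset.induction_on with
  | empty => simp
  | @insert a s' ha ih => rw [Finset.sum_insert ha, Finset.sum_insert ha, Multiset.sum_add, ih]

lemma count_partsOf (l : ℕ →₀ ℕ) (v : ℕ) :
    (partsOf l).count v = if v ∈ l.support then l v / v else 0 := by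
  unfold partsOf
  rw [Multiset.count_sum']
  rw [Finset.sum_congr rfl (fun w _ => Multiset.count_replicate v w (l w / w))]
  exact Finset.sum_ite_eq' l.support v (fun w => l w / w)

lemma finOf_apply {k : ℕ} (p : k.Partition) (v : ℕ) :
    finOf p v = v * p.parts.count v := rfl

lemma finOf_support {k : ℕ} (p : k.Partition) : (finOf p).support = p.parts.toFinset := by
  ext v
  rw [Finsupp.mem_support_iff, finOf_apply, Multiset.mem_toFinset]
  constructor
  · intro h
    rw [← Multiset.count_pos]
    by_contra hc
    push_neg at hc
    have : p.parts.count v = 0 := by omega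
    simp [this] at h
  · intro h
    have hv : 0 < v := p.parts_pos h
    have hc : 0 < p.parts.count v := Multiset.count_pos.mpr h
    positivity

lemma parts_sum_eq {k : ℕ} (p : k.Partition) :
    ∑ v ∈ p.parts.toFinset, v * p.parts.count v = k := by
  have h := Finset.sum_multiset_map_count p.parts (id : ℕ → ℕ)
  rw [Multiset.map_id] at h
  conv_rhs => rw [← p.parts_sum, h]
  apply Finset.sum_congr rfl
  intro v _
  simp only [smul_eq_mul, id]
  ring

lemma finOf_mem {Nn k : ℕ} (hk : k ≤ Nn) (p : k.Partition) :
    finOf p ∈ (Finset.finsuppAntidiag (Icc 1 Nn) k).filter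
      (fun l => ∀ v ∈ l.support, v ∣ l v) := by
  classical
  rw [Finset.mem_filter, Finset.mem_finsuppAntidiag]
  have hsub : (finOf p).support ⊆ Icc 1 Nn := by
    rw [finOf_support]
    intro v hv
    rw [Multiset.mem_toFinset] at hv
    have h1 := p.parts_pos hv
    have h2 : v ≤ k := (Multiset.le_sum_of_mem hv).trans_eq p.parts_sum
    exact mem_Icc.mpr ⟨h1, by omega⟩
  refine ⟨⟨?_, hsub⟩, ?_⟩
  · rw [← Finset.sum_subset hsub (fun v _ hvn => Finsupp.notMem_support_iff.mp hvn)]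
    have : ∑ v ∈ (finOf p).support, finOf p v
        = ∑ v ∈ p.parts.toFinset, v * p.parts.count v := by
      rw [finOf_support]
      exact Finset.sum_congr rfl (fun v _ => finOf_apply p v)
    rw [this, parts_sum_eq]
  · intro v hv
    exact dvd_mul_right v _

lemma partsOf_finOf {k : ℕ} (p : k.Partition) : partsOf (finOf p) = p.parts := by
  rw [Multiset.ext]
  intro v
  rw [count_partsOf, finOf_support]
  by_cases hv : v ∈ p.parts.toFinset
  · rw [if_pos hv, finOf_apply,
      Nat.mul_div_cancel_left _ (p.parts_pos (Multiset.mem_toFinset.mp hv))]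
  · rw [if_neg hv]
    rw [Multiset.mem_toFinset] at hv
    exact (Multiset.count_eq_zero.mpr hv).symm

lemma good_partition {Nn k : ℕ} {l : ℕ →₀ ℕ}
    (hl : l ∈ (Finset.finsuppAntidiag (Icc 1 Nn) k).filter
      (fun l => ∀ v ∈ l.support, v ∣ l v)) :
    ∃ p : k.Partition, finOf p = l := by
  classical
  rw [Finset.mem_filter, Finset.mem_finsuppAntidiag] at hl
  obtain ⟨⟨hsum, hsub⟩, hgood⟩ := hl
  have hpos : ∀ {v : ℕ}, v ∈ partsOf l → 0 < v := by
    intro v hv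
    unfold partsOf at hv
    rw [Multiset.mem_sum] at hv
    obtain ⟨w, hw, hvw⟩ := hv
    have hvw' := Multiset.eq_of_mem_replicate hvw
    subst hvw'
    have := mem_Icc.mp (hsub hw)
    omega
  have hsum2 : (partsOf l).sum = k := by
    unfold partsOf
    rw [multiset_sum_sum]
    have hrep : ∀ w ∈ l.support, (Multiset.replicate (l w / w) w).sum = l w := by
      intro w hw
      rw [Multiset.sum_replicate, smul_eq_mul]
      exact Nat.div_mul_cancel (hgood w hw)
    rw [Finset.sum_congr rfl hrep, ← hsum]
    exact Finset.sum_subset hsub (fun v _ hvn => Finsupp.notMem_support_iff.mp hvn)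
  refine ⟨⟨partsOf l, hpos, hsum2⟩, ?_⟩
  apply Finsupp.ext
  intro v
  have happ : finOf (⟨partsOf l, @hpos, hsum2⟩ : k.Partition) v
      = v * (partsOf l).count v := rfl
  rw [happ, count_partsOf]
  by_cases hv : v ∈ l.support
  · rw [if_pos hv]
    exact Nat.mul_div_cancel' (hgood v hv)
  · rw [if_neg hv]
    rw [Finsupp.notMem_support_iff] at hv
    omega

lemma coeff_Hb {Nn k : ℕ} (hk : k ≤ Nn) :
    (coeff k) (Hb Nn) = (overpartitionCount k : ZMod 32) := by
  classical
  unfold Hb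
  rw [PowerSeries.coeff_prod,
    ← Finset.sum_filter_add_sum_filter_not (Finset.finsuppAntidiag (Icc 1 Nn) k)
      (fun l => ∀ v ∈ l.support, v ∣ l v)]
  have hbad : ∑ l ∈ (Finset.finsuppAntidiag (Icc 1 Nn) k).filter
      (fun l => ¬ ∀ v ∈ l.support, v ∣ l v),
      ∏ v ∈ Icc 1 Nn, (coeff (l v)) (hfac v) = 0 := by
    apply Finset.sum_eq_zero
    intro l hl
    rw [Finset.mem_filter] at hl
    obtain ⟨hl1, hl2⟩ := hl
    push_neg at hl2
    obtain ⟨v, hvs, hvd⟩ := hl2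
    have hvI : v ∈ Icc 1 Nn := (Finset.mem_finsuppAntidiag.mp hl1).2 hvs
    apply Finset.prod_eq_zero hvI
    exact coeff_hfac_ndvd (Finsupp.mem_support_iff.mp hvs) hvd
  rw [hbad, add_zero]
  have hgoodval : ∀ l ∈ (Finset.finsuppAntidiag (Icc 1 Nn) k).filter
      (fun l => ∀ v ∈ l.support, v ∣ l v),
      (∏ v ∈ Icc 1 Nn, (coeff (l v)) (hfac v)) = 2 ^ l.support.card := by
    intro l hl
    rw [Finset.mem_filter] at hl
    obtain ⟨hl1, hgood⟩ := hl
    have hsub := (Finset.mem_finsuppAntidiag.mp hl1).2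
    have h1 : (∏ v ∈ Icc 1 Nn, (coeff (l v)) (hfac v))
        = ∏ v ∈ l.support, (coeff (l v)) (hfac v) := by
      refine (Finset.prod_subset hsub (fun v _ hvn => ?_)).symm
      rw [Finsupp.notMem_support_iff.mp hvn, coeff_hfac_zero]
    have h2 : ∏ v ∈ l.support, (coeff (l v)) (hfac v)
        = ∏ _v ∈ l.support, (2 : ZMod 32) :=
      Finset.prod_congr rfl
        (fun v hv => coeff_hfac_dvd (Finsupp.mem_support_iff.mp hv) (hgood v hv))
    rw [h1, h2, Finset.prod_const]
  rw [Finset.sum_congr rfl hgoodval]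
  unfold overpartitionCount
  push_cast
  symm
  apply Finset.sum_bij (i := fun (p : k.Partition) _ => finOf p)
  · intro p _
    exact finOf_mem hk p
  · intro p1 _ p2 _ heq
    apply Nat.Partition.ext
    rw [← partsOf_finOf p1, ← partsOf_finOf p2, heq]
  · intro l hl
    obtain ⟨p, hp⟩ := good_partition hl
    exact ⟨p, Finset.mem_univ p, hp⟩
  · intro p _
    rw [finOf_support]

lemma coeff_Hb_pow (Nn t : ℕ) :
    (coeff Nn) ((Hb Nn)^t) = (overpartitionTuples t Nn : ZMod 32) := by
  classical
  rw [PowerSeries.coeff_pow]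
  unfold overpartitionTuples
  push_cast
  symm
  apply Finset.sum_bij (i := fun (c : Fin t → ℕ) (_ : c ∈ Finset.Nat.antidiagonalTuple t Nn) =>
    Finsupp.onFinset (range t) (fun j => if h : j < t then c ⟨j, h⟩ else 0)
      (fun j hj => by
        rw [mem_range]
        by_contra hc
        simp only [dif_neg hc] at hj
        exact hj rfl))
  · intro c hc
    rw [Finset.mem_finsuppAntidiag]
    constructor
    · have h1 : ∑ j ∈ range t, (fun j => if h : j < t then c ⟨j, h⟩ else 0) j
          = ∑ i : Fin t, c i := by
        rw [← Fin.sum_univ_eq_sum_range]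
        apply Finset.sum_congr rfl
        intro i _
        rw [dif_pos i.isLt]
      have h2 := Finset.Nat.mem_antidiagonalTuple.mp hc
      calc ∑ j ∈ range t, (Finsupp.onFinset (range t)
              (fun j => if h : j < t then c ⟨j, h⟩ else 0) _) j
          = ∑ j ∈ range t, (fun j => if h : j < t then c ⟨j, h⟩ else 0) j :=
            Finset.sum_congr rfl (fun j _ => Finsupp.onFinset_apply)
        _ = Nn := by rw [h1, h2]
    · exact Finsupp.support_onFinset_subset
  · intro c1 h1 c2 h2 heq
    funext i
    have h := DFunLike.congr_fun heq i.val
    simp only [Finsupp.onFinset_apply, dif_pos i.isLt] at h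
    exact h
  · intro l hl
    obtain ⟨hsum, hsub⟩ := Finset.mem_finsuppAntidiag.mp hl
    refine ⟨fun i => l i.val, ?_, ?_⟩
    · rw [Finset.Nat.mem_antidiagonalTuple]
      rw [Fin.sum_univ_eq_sum_range (fun j => l j) t]
      exact hsum
    · apply Finsupp.ext
      intro a
      rw [Finsupp.onFinset_apply]
      by_cases ha : a < t
      · rw [dif_pos ha]
      · rw [dif_neg ha]
        symm
        rw [← Finsupp.notMem_support_iff]
        intro hmem
        exact ha (mem_range.mp (hsub hmem))
  · intro c hc
    have hb : ∀ i : Fin t, c i ≤ Nn := by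
      intro i
      rw [← Finset.Nat.mem_antidiagonalTuple.mp hc]
      exact Finset.single_le_sum (fun j _ => Nat.zero_le (c j)) (mem_univ i)
    rw [← Fin.prod_univ_eq_prod_range]
    apply Finset.prod_congr rfl
    intro i _
    rw [Finsupp.onFinset_apply, dif_pos i.isLt]
    exact (coeff_Hb (hb i)).symm

theorem overpartitionTuples_eight_n_seven_mod_thirtytwo (t n : ℕ) :
    overpartitionTuples t (8 * n + 7) ≡ 0 [MOD 32] := by
  set Nn := 8 * n + 7 with hNdef
  have hN : Nn % 8 = 7 := by omega
  have hcast : ((overpartitionTuples t Nn : ℕ) : ZMod 32) = 0 := by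
    rw [← coeff_Hb_pow Nn t, apx_pow (Hb_apx_J Nn) t Nn le_rfl]
    obtain ⟨c1, c2, c3, c4, hJ⟩ := Jpow Nn t
    rw [hJ]
    have e1 : (2 : PS) * C' c1 * aser Nn = C' (2*c1) * aser Nn := by
      rw [map_mul, map_ofNat]
    have e2 : (4 : PS) * C' c2 * (aser Nn)^2 = C' (4*c2) * (aser Nn)^2 := by
      rw [map_mul, map_ofNat]
    have e3 : (8 : PS) * C' c3 * (aser Nn)^3 = C' (8*c3) * (aser Nn)^3 := by
      rw [map_mul, map_ofNat]
    have e4 : (16 : PS) * C' c4 * (aser Nn)^4 = C' c4 * (16 * (aser Nn)^4) := by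
      ring
    rw [e1, e2, e3, e4, map_add, map_add, map_add, map_add, coeff_one,
      if_neg (by omega : ¬ Nn = 0), coeff_C_mul, coeff_C_mul, coeff_C_mul, coeff_C_mul,
      coeff_a1 hN, coeff_a2 hN, coeff_a3 hN]
    have h16 : (coeff Nn) ((16 : PS) * (aser Nn)^4) = 0 := by
      have h16' : (16 : PS) = C' (16 : ZMod 32) := by rw [map_ofNat]
      rw [h16', coeff_C_mul]
      exact zmod_kill (coeff_a4_even hN)
    rw [h16]
    simp
  rw [Nat.modEq_zero_iff_dvd]
  exact (ZMod.natCast_eq_zero_iff _ 32).mp hcast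

end OverpartitionProof
end

section
/- For all integers i ≥ 1, j ≥ 1, all positive integers k not divisible by 2 or 3, and all n ≥ 0, the number of overpartition (3^i·2^j·k)-tuples with odd parts satisfies OPT̄_{3^i·2^j·k}(3n+1) ≡ 0 (mod 3^i·2^{j+1}). -/
/-- The number of overpartitions of `n` into odd parts: a partition of `n` into odd
parts together with a choice of which distinct part values are overlined. -/
def overpartitionOddCount (n : ℕ) : ℕ :=
  ∑ p ∈ Nat.Partition.odds n, 2 ^ p.parts.toFinset.card

/-- The number of overpartition `k`-tuples of `n` with odd parts. -/
def overpartitionOddTuples (k n : ℕ) : ℕ :=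
  ∑ c ∈ Finset.Nat.antidiagonalTuple k n, ∏ i, overpartitionOddCount (c i)

open Finset

private lemma two_dvd_overpartitionOddCount (m : ℕ) : 2 ∣ overpartitionOddCount (m + 1) := by
  unfold overpartitionOddCount
  refine Finset.dvd_sum fun p hp => ?_
  refine dvd_pow_self 2 ?_
  intro hcard
  have h0 : p.parts.toFinset = ∅ := Finset.card_eq_zero.mp hcard
  have hp0 : p.parts = 0 := by simpa using Multiset.toFinset_eq_empty.mp h0
  have := p.parts_sum
  rw [hp0] at this
  simp at this

private lemma sum_antidiagonalTuple_succ {β : Type*} [AddCommMonoid β] (k n : ℕ)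
    (g : (Fin (k + 1) → ℕ) → β) :
    ∑ c ∈ Finset.Nat.antidiagonalTuple (k + 1) n, g c
      = ∑ p ∈ Finset.HasAntidiagonal.antidiagonal n,
          ∑ c ∈ Finset.Nat.antidiagonalTuple k p.2, g (Fin.cons p.1 c) := by
  rw [Finset.sum_sigma' (Finset.HasAntidiagonal.antidiagonal n)
    (fun p => Finset.Nat.antidiagonalTuple k p.2) (fun p c => g (Fin.cons p.1 c))]
  refine (Finset.sum_nbij'
    (i := fun c => (⟨(c 0, ∑ i, Fin.tail c i), Fin.tail c⟩ : Σ _ : ℕ × ℕ, Fin k → ℕ))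
    (j := fun x => Fin.cons x.1.1 x.2) ?_ ?_ ?_ ?_ ?_)
  · intro c hc
    have hsum : ∑ i, c i = n := Finset.Nat.mem_antidiagonalTuple.mp hc
    rw [Finset.mem_sigma]
    constructor
    · rw [Finset.HasAntidiagonal.mem_antidiagonal]
      rw [Fin.sum_univ_succ] at hsum
      simpa [Fin.tail] using hsum
    · exact Finset.Nat.mem_antidiagonalTuple.mpr rfl
  · intro x hx
    rw [Finset.mem_sigma] at hx
    obtain ⟨h1, h2⟩ := hx
    rw [Finset.HasAntidiagonal.mem_antidiagonal] at h1
    have h3 : ∑ i, x.2 i = x.1.2 := Finset.Nat.mem_antidiagonalTuple.mp h2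
    refine Finset.Nat.mem_antidiagonalTuple.mpr ?_
    rw [Fin.sum_cons, h3, h1]
  · intro c hc
    exact Fin.cons_self_tail c
  · intro x hx
    rw [Finset.mem_sigma] at hx
    obtain ⟨h1, h2⟩ := hx
    have h3 : ∑ i, x.2 i = x.1.2 := Finset.Nat.mem_antidiagonalTuple.mp h2
    obtain ⟨⟨a, b⟩, v⟩ := x
    simp only [Fin.cons_zero, Fin.tail_cons]
    congr 1
    simp only at h3
    simp [h3]
  · intro c hc
    exact congrArg g (Fin.cons_self_tail c).symm

private lemma coeff_pow_eq_sum_antidiagonalTuple (ψ : PowerSeries ℕ) (k n : ℕ) :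
    PowerSeries.coeff n (ψ ^ k)
      = ∑ c ∈ Finset.Nat.antidiagonalTuple k n, ∏ i, PowerSeries.coeff (c i) ψ := by
  induction k generalizing n with
  | zero =>
    cases n with
    | zero => simp [Finset.Nat.antidiagonalTuple_zero_zero]
    | succ n => simp [Finset.Nat.antidiagonalTuple_zero_succ]
  | succ k ih =>
    rw [pow_succ', PowerSeries.coeff_mul, sum_antidiagonalTuple_succ]
    refine Finset.sum_congr rfl fun p hp => ?_
    rw [ih p.2, Finset.mul_sum]
    refine Finset.sum_congr rfl fun c hc => ?_
    rw [Fin.prod_univ_succ]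
    simp

private lemma oot_coeff (k n : ℕ) :
    overpartitionOddTuples k n
      = PowerSeries.coeff n ((PowerSeries.mk overpartitionOddCount) ^ k) := by
  rw [coeff_pow_eq_sum_antidiagonalTuple]
  unfold overpartitionOddTuples
  simp [PowerSeries.coeff_mk]

private lemma oot_factor (M k N : ℕ) :
    overpartitionOddTuples (M * k) N
      = ∑ d ∈ Finset.Nat.antidiagonalTuple M N, ∏ a, overpartitionOddTuples k (d a) := by
  rw [oot_coeff (M * k) N, mul_comm M k, pow_mul, coeff_pow_eq_sum_antidiagonalTuple]
  refine Finset.sum_congr rfl fun d hd => ?_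
  refine Finset.prod_congr rfl fun a ha => ?_
  rw [oot_coeff]

private lemma two_dvd_oot (k m : ℕ) : 2 ∣ overpartitionOddTuples k (m + 1) := by
  unfold overpartitionOddTuples
  refine Finset.dvd_sum fun c hc => ?_
  have hsum : ∑ i, c i = m + 1 := Finset.Nat.mem_antidiagonalTuple.mp hc
  have hex : ∃ i, c i ≠ 0 := by
    by_contra h
    push_neg at h
    simp [h] at hsum
  obtain ⟨i, hi⟩ := hex
  obtain ⟨m', hm'⟩ := Nat.exists_eq_succ_of_ne_zero hi
  have h2 : 2 ∣ overpartitionOddCount (c i) := hm' ▸ two_dvd_overpartitionOddCount m'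
  exact h2.trans (Finset.dvd_prod_of_mem _ (Finset.mem_univ i))
section Rot

variable {M : ℕ} [NeZero M]

open Fin.NatCast Fin.CommRing

private def rot (t : ℕ) (c : Fin M → ℕ) : Fin M → ℕ := fun x => c (x + (t : Fin M))

private lemma rot_rot (a b : ℕ) (c : Fin M → ℕ) : rot a (rot b c) = rot (a + b) c := by
  funext x
  simp only [rot]
  congr 1
  push_cast
  ring

private lemma rot_zero (c : Fin M → ℕ) : rot 0 c = c := by
  funext x; simp [rot]

private lemma rot_self (c : Fin M → ℕ) : rot M c = c := by
  funext x; simp [rot, Fin.natCast_self]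

private lemma rot_mul {d : ℕ} (a : ℕ) {c : Fin M → ℕ} (h : rot d c = c) :
    rot (d * a) c = c := by
  induction a with
  | zero => simpa using rot_zero c
  | succ a ih => rw [Nat.mul_succ, ← rot_rot, h, ih]

private lemma sum_rot (t : ℕ) (c : Fin M → ℕ) : ∑ x, rot t c x = ∑ x, c x :=
  Fintype.sum_equiv (Equiv.addRight (t : Fin M)) _ _ fun x => rfl

private lemma prod_rot (F : ℕ → ℕ) (t : ℕ) (c : Fin M → ℕ) :
    ∏ x, F (rot t c x) = ∏ x, F (c x) :=
  Fintype.prod_equiv (Equiv.addRight (t : Fin M)) _ _ fun x => rfl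

private lemma per_exists (c : Fin M → ℕ) : ∃ t, 0 < t ∧ rot t c = c :=
  ⟨M, Nat.pos_of_ne_zero (NeZero.ne M), rot_self c⟩

private def per (c : Fin M → ℕ) : ℕ := Nat.find (per_exists c)

private lemma per_pos (c : Fin M → ℕ) : 0 < per c := (Nat.find_spec (per_exists c)).1

private lemma rot_per (c : Fin M → ℕ) : rot (per c) c = c := (Nat.find_spec (per_exists c)).2

private lemma per_min {t : ℕ} (c : Fin M → ℕ) (h0 : 0 < t) (h : rot t c = c) : per c ≤ t :=
  Nat.find_min' _ ⟨h0, h⟩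

private lemma rot_mod (t : ℕ) (c : Fin M → ℕ) : rot t c = rot (t % per c) c := by
  conv_lhs => rw [← Nat.mod_add_div t (per c)]
  rw [← rot_rot, rot_mul _ (rot_per c)]

private lemma per_dvd (c : Fin M → ℕ) : per c ∣ M := by
  have h1 : rot (M % per c) c = c := by rw [← rot_mod, rot_self]
  rcases Nat.eq_zero_or_pos (M % per c) with h | h
  · exact Nat.dvd_of_mod_eq_zero h
  · have h2 := per_min c h h1
    have h3 := Nat.mod_lt M (per_pos c)
    omega

private lemma rot_cancel (t : ℕ) (c : Fin M → ℕ) : rot (M * t - t) (rot t c) = c := by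
  have hM : 0 < M := Nat.pos_of_ne_zero (NeZero.ne M)
  have ht : t ≤ M * t := Nat.le_mul_of_pos_left t hM
  rw [rot_rot, Nat.sub_add_cancel ht]
  exact rot_mul t (rot_self c)

private lemma rot_inj {t : ℕ} {c c' : Fin M → ℕ} (h : rot t c = rot t c') : c = c' := by
  have h2 := congrArg (rot (M * t - t)) h
  rwa [rot_cancel, rot_cancel] at h2

private def orb (c : Fin M → ℕ) : Finset (Fin M → ℕ) :=
  (Finset.range (per c)).image (rot · c)

private lemma mem_orb {x c : Fin M → ℕ} : x ∈ orb c ↔ ∃ t, rot t c = x := by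
  constructor
  · rintro hx
    obtain ⟨t, -, rfl⟩ := Finset.mem_image.mp hx
    exact ⟨t, rfl⟩
  · rintro ⟨t, rfl⟩
    refine Finset.mem_image.mpr ⟨t % per c, Finset.mem_range.mpr (Nat.mod_lt t (per_pos c)), ?_⟩
    exact (rot_mod t c).symm

private lemma self_mem_orb (c : Fin M → ℕ) : c ∈ orb c :=
  mem_orb.mpr ⟨0, rot_zero c⟩

private lemma rot_eq_self_iff (a t : ℕ) (c : Fin M → ℕ) :
    rot a (rot t c) = rot t c ↔ rot a c = c := by
  constructor
  · intro h
    rw [rot_rot] at h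
    refine rot_inj (t := t) ?_
    rw [rot_rot, Nat.add_comm t a]
    exact h
  · intro h
    have h2 : rot a (rot t c) = rot t (rot a c) := by rw [rot_rot, rot_rot, Nat.add_comm]
    rw [h2, h]

private lemma per_rot (t : ℕ) (c : Fin M → ℕ) : per (rot t c) = per c := by
  refine le_antisymm ?_ ?_
  · exact per_min _ (per_pos c) ((rot_eq_self_iff _ t c).mpr (rot_per c))
  · exact per_min _ (per_pos (rot t c)) ((rot_eq_self_iff _ t c).mp (rot_per (rot t c)))

private lemma orb_rot (t : ℕ) (c : Fin M → ℕ) : orb (rot t c) = orb c := by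
  ext x
  rw [mem_orb, mem_orb]
  constructor
  · rintro ⟨a, rfl⟩
    exact ⟨a + t, (rot_rot a t c).symm⟩
  · rintro ⟨a, rfl⟩
    exact ⟨a + (M * t - t), by rw [← rot_rot, rot_cancel]⟩

private def lexLO (M : ℕ) : LinearOrder (Fin M → ℕ) :=
  LinearOrder.lift' List.ofFn List.ofFn_injective

attribute [local instance] lexLO

private noncomputable def rep (c : Fin M → ℕ) : Fin M → ℕ :=
  (orb c).min' ⟨c, self_mem_orb c⟩

private lemma rep_mem (c : Fin M → ℕ) : rep c ∈ orb c := Finset.min'_mem _ _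

private lemma rep_rot (t : ℕ) (c : Fin M → ℕ) : rep (rot t c) = rep c := by
  unfold rep
  simp only [orb_rot]

private lemma sum_orb (F : ℕ → ℕ) (c : Fin M → ℕ) :
    ∑ x ∈ orb c, ∏ a, F (x a) = per c * ∏ a, F (c a) := by
  unfold orb
  rw [Finset.sum_image]
  · rw [Finset.sum_congr rfl fun t _ => prod_rot F t c]
    simp [Finset.sum_const, mul_comm]
  · intro a ha b hb hab
    rw [Finset.mem_coe, Finset.mem_range] at ha hb
    rcases Nat.le_total a b with hle | hle
    · by_contra hne
      have h1 : rot (b - a) c = c := by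
        refine rot_inj (t := a) ?_
        have hba : a + (b - a) = b := by omega
        rw [rot_rot, hba]; exact hab.symm
      have := per_min c (by omega) h1
      omega
    · by_contra hne
      have h1 : rot (a - b) c = c := by
        refine rot_inj (t := b) ?_
        have hba : b + (a - b) = a := by omega
        rw [rot_rot, hba]; exact hab
      have := per_min c (by omega) h1
      omega

private lemma period_sum {d u : ℕ} {c : Fin M → ℕ} (h : rot d c = c) (hdu : d * u = M) :
    ∑ x, c x = u * ∑ b ∈ Finset.range d, c b := by
  have h1 : ∑ x, c x = ∑ m ∈ Finset.range M, c m := by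
    rw [← Fin.sum_univ_eq_sum_range (fun m => c m) M]
    exact Finset.sum_congr rfl fun x _ => by rw [Fin.cast_val_eq_self]
  have key : ∀ v, ∑ m ∈ Finset.range (d * v), c m = v * ∑ b ∈ Finset.range d, c b := by
    intro v
    induction v with
    | zero => simp
    | succ v ih =>
      rw [Nat.mul_succ, Finset.sum_range_add, ih, Nat.succ_mul]
      congr 1
      refine Finset.sum_congr rfl fun b _ => ?_
      have h2 : ((d * v + b : ℕ) : Fin M) = (b : Fin M) + ((d * v : ℕ) : Fin M) := by
        push_cast; ring
      rw [h2]
      exact congrFun (rot_mul v h) (b : Fin M)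
  calc ∑ x, c x = ∑ m ∈ Finset.range (d * u), c m := by rw [hdu]; exact h1
    _ = u * ∑ b ∈ Finset.range d, c b := key u

private lemma period_prod (F : ℕ → ℕ) {d u : ℕ} {c : Fin M → ℕ} (h : rot d c = c)
    (hdu : d * u = M) :
    ∏ x, F (c x) = (∏ b ∈ Finset.range d, F (c b)) ^ u := by
  have h1 : ∏ x, F (c x) = ∏ m ∈ Finset.range M, F (c m) := by
    rw [← Fin.prod_univ_eq_prod_range (fun m => F (c m)) M]
    exact Finset.prod_congr rfl fun x _ => by rw [Fin.cast_val_eq_self]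
  have key : ∀ v, ∏ m ∈ Finset.range (d * v), F (c m) = (∏ b ∈ Finset.range d, F (c b)) ^ v := by
    intro v
    induction v with
    | zero => simp
    | succ v ih =>
      rw [Nat.mul_succ, Finset.prod_range_add, ih, pow_succ]
      congr 1
      refine Finset.prod_congr rfl fun b _ => ?_
      have h2 : ((d * v + b : ℕ) : Fin M) = (b : Fin M) + ((d * v : ℕ) : Fin M) := by
        push_cast; ring
      rw [h2]
      exact congrArg F (congrFun (rot_mul v h) (b : Fin M))
  calc ∏ x, F (c x) = ∏ m ∈ Finset.range (d * u), F (c m) := by rw [hdu]; exact h1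
    _ = (∏ b ∈ Finset.range d, F (c b)) ^ u := key u

end Rot

open Fin.NatCast

private lemma key_dvd (F : ℕ → ℕ) (hF : ∀ m, 2 ∣ F (m + 1)) (i j N : ℕ)
    (hN3 : ¬ 3 ∣ N) (hN : 0 < N) :
    3 ^ i * 2 ^ (j + 1) ∣ ∑ d ∈ Finset.Nat.antidiagonalTuple (3 ^ i * 2 ^ j) N, ∏ a, F (d a) := by
  set M := 3 ^ i * 2 ^ j with hM
  haveI : NeZero M := ⟨by positivity⟩
  set S := Finset.Nat.antidiagonalTuple M N with hS
  have hSrot : ∀ (t : ℕ) (c : Fin M → ℕ), c ∈ S → rot t c ∈ S := by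
    intro t c hc
    rw [hS, Finset.Nat.mem_antidiagonalTuple] at hc ⊢
    rw [sum_rot]
    exact hc
  have hmaps : ∀ c ∈ S, rep c ∈ S := by
    intro c hc
    obtain ⟨t, ht⟩ := mem_orb.mp (rep_mem c)
    rw [← ht]
    exact hSrot t c hc
  rw [← Finset.sum_fiberwise_of_maps_to hmaps (fun c => ∏ a, F (c a))]
  refine Finset.dvd_sum fun y hy => ?_
  rcases Finset.eq_empty_or_nonempty (S.filter (fun c => rep c = y)) with he | ⟨c0, hc0⟩
  · rw [he]
    simp
  · rw [Finset.mem_filter] at hc0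
    obtain ⟨hc0S, hc0rep⟩ := hc0
    obtain ⟨t0, ht0⟩ := mem_orb.mp (rep_mem c0)
    have hyS : y ∈ S := by
      rw [← hc0rep, ← ht0]
      exact hSrot t0 c0 hc0S
    have hyrep : rep y = y := by
      rw [← hc0rep, ← ht0, rep_rot, ht0]
    have hfil : S.filter (fun c => rep c = y) = orb y := by
      ext x
      rw [Finset.mem_filter]
      constructor
      · rintro ⟨hxS, hxrep⟩
        obtain ⟨t, ht⟩ := mem_orb.mp (rep_mem x)
        rw [hxrep] at ht
        refine mem_orb.mpr ⟨M * t - t, ?_⟩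
        rw [← ht, rot_cancel]
      · intro hx
        obtain ⟨t, ht⟩ := mem_orb.mp hx
        constructor
        · rw [← ht]
          exact hSrot t y hyS
        · rw [← ht, rep_rot, hyrep]
    rw [hfil, sum_orb F y]
    set d := per y with hd
    obtain ⟨u, hu⟩ := per_dvd y
    have hNsum : ∑ x, y x = N := Finset.Nat.mem_antidiagonalTuple.mp hyS
    have hsum := period_sum (rot_per y) hu.symm
    set B := ∑ b ∈ Finset.range d, y b with hB
    have hNuB : N = u * B := by rw [← hNsum, hsum]
    have hprod := period_prod F (rot_per y) hu.symm
    have hu3 : ¬ (3 ∣ u) := by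
      intro h3
      exact hN3 (hNuB ▸ Dvd.dvd.mul_right h3 B)
    have hcop : Nat.Coprime u (3 ^ i) :=
      ((Nat.prime_three.coprime_iff_not_dvd.mpr hu3).pow_left i).symm
    have huM : u ∣ M := Dvd.intro_left d hu.symm
    have hu2j : u ∣ 2 ^ j := hcop.dvd_of_dvd_mul_left (hM ▸ huM)
    obtain ⟨c, hcj, rfl⟩ := (Nat.dvd_prime_pow Nat.prime_two).mp hu2j
    have hd_eq : d = 3 ^ i * 2 ^ (j - c) := by
      have h2 : d * 2 ^ c = (3 ^ i * 2 ^ (j - c)) * 2 ^ c := by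
        rw [mul_assoc, ← pow_add, Nat.sub_add_cancel hcj, ← hM]
        exact hu.symm
      exact Nat.eq_of_mul_eq_mul_right (pow_pos two_pos c) h2
    have hBpos : 0 < B := by
      rcases Nat.eq_zero_or_pos B with h | h
      · rw [h, mul_zero] at hNuB
        omega
      · exact h
    have hex : ∃ b ∈ Finset.range d, y b ≠ 0 := by
      by_contra h
      push_neg at h
      have hB0 : B = 0 := Finset.sum_eq_zero fun b hb => h b hb
      omega
    obtain ⟨b, hb, hyb⟩ := hex
    obtain ⟨m', hm'⟩ := Nat.exists_eq_succ_of_ne_zero hyb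
    have h2yb : 2 ∣ F (y b) := by
      rw [hm']
      exact hF m'
    have h2blk : 2 ∣ ∏ b' ∈ Finset.range d, F (y b') :=
      h2yb.trans (Finset.dvd_prod_of_mem _ hb)
    have h2w : 2 ^ (2 ^ c) ∣ (∏ b' ∈ Finset.range d, F (y b')) ^ (2 ^ c) :=
      pow_dvd_pow_of_dvd h2blk _
    rw [hprod]
    refine dvd_trans ?_ (mul_dvd_mul_left d h2w)
    rw [hd_eq, mul_assoc, ← pow_add]
    refine mul_dvd_mul_left _ (pow_dvd_pow 2 ?_)
    have := @Nat.lt_two_pow_self c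
    omega

theorem overpartitionOddTuples_three_n_one (i j k n : ℕ) (hi : 1 ≤ i) (hj : 1 ≤ j)
    (hk : 0 < k) (hk2 : ¬ (2 ∣ k)) (hk3 : ¬ (3 ∣ k)) :
    overpartitionOddTuples (3 ^ i * 2 ^ j * k) (3 * n + 1) ≡ 0 [MOD 3 ^ i * 2 ^ (j + 1)] := by
  rw [Nat.modEq_zero_iff_dvd, oot_factor (3 ^ i * 2 ^ j) k (3 * n + 1)]
  exact key_dvd (overpartitionOddTuples k) (two_dvd_oot k) i j (3 * n + 1) (by omega) (by omega)
end
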